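/- arXiv:math/0303126 — 5 statements merged into one kernel-verified Lean document; each statement's English description precedes it below -/
import Mathlib

section
/- Let H be a separable real Hilbert space with topological dual H', let {v_k}_{k∈ℕ} be an orthonormal basis of H, and let γ : ℕ → [0,∞) and positive constants p, C₂ be such that for every n ∈ ℕ the number of indices k with γ(k) ≤ n is at most C₂(1+n)^p. Set C₄ = C₂ (Σ_{n=1}^∞ (n+1)^{-2})^{1/2}. Let G be a bounded linear operator from H to H' and set a_{k,l} = ⟨G v_k, v_l⟩. If M = sup_{k,l} |a_{k,l}| (2 + max{γ(k), γ(l)})^{p+1} is finite, then the operator norm of G satisfies ‖G‖_{L(H,H')} ≤ C₄ M. -/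
open scoped RealInnerProductSpace

/-- Let `H` be a separable real Hilbert space with dual `H'`, `(v_k)` an
orthonormal basis of `H`, and `γ : ℕ → [0,∞)` with `#{k : γ(k) ≤ n} ≤ C₂(1+n)^p` for all
`n ∈ ℕ` (`p, C₂ > 0`). Set `C₄ = C₂ (Σ_{n=1}^∞ (n+1)^{-2})^{1/2}`. If `G : H → H'` is a
bounded linear operator, `a_{k,l} = ⟨G v_k, v_l⟩`, and
`M ≥ |a_{k,l}| (2 + max{γ(k),γ(l)})^(p+1)` for all `k, l` (i.e. the supremum `M` of these
quantities is finite), then `‖G‖ ≤ C₄ M`. -/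
theorem stmt4 {H : Type*} [NormedAddCommGroup H] [InnerProductSpace ℝ H] [CompleteSpace H]
    [TopologicalSpace.SeparableSpace H]
    (v : HilbertBasis ℕ ℝ H)
    (γ : ℕ → ℝ) (hγ : ∀ k, 0 ≤ γ k)
    (p C₂ : ℝ) (hp : 0 < p) (hC₂ : 0 < C₂)
    (hcount : ∀ n : ℕ, {k : ℕ | γ k ≤ (n : ℝ)}.Finite ∧
      (({k : ℕ | γ k ≤ (n : ℝ)}.ncard : ℝ) ≤ C₂ * (1 + (n : ℝ)) ^ p))
    (G : H →L[ℝ] StrongDual ℝ H) (M : ℝ)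
    (hM : ∀ k l : ℕ, |(G (v k)) (v l)| * (2 + max (γ k) (γ l)) ^ (p + 1) ≤ M) :
    ‖G‖ ≤ (C₂ * Real.sqrt (∑' n : ℕ, (((n : ℝ) + 2) ^ 2)⁻¹)) * M := by
  classical
  have hM0 : 0 ≤ M := by
    refine le_trans ?_ (hM 0 0)
    have h1 : (0:ℝ) < 2 + max (γ 0) (γ 0) := by
      have := hγ 0; simp only [max_self]; linarith
    positivity
  set T : ℝ := ∑' n : ℕ, (((n : ℝ) + 2) ^ 2)⁻¹ with hTdef
  have hTsum : Summable (fun n : ℕ => (((n : ℝ) + 2) ^ 2)⁻¹) := by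
    have h1 : Summable (fun n : ℕ => ((n : ℝ) ^ 2)⁻¹) :=
      Real.summable_nat_pow_inv.2 one_lt_two
    have h2 := (summable_nat_add_iff 2).2 h1
    refine h2.congr fun n => ?_
    push_cast
    ring_nf
  have hT0 : 0 ≤ T := tsum_nonneg fun n => by positivity
  set f : ℕ × ℕ → ℝ := fun q => (G (v q.1) (v q.2)) ^ 2 with hfdef
  have hf0 : ∀ q, 0 ≤ f q := fun q => sq_nonneg _
  -- pointwise bound on the matrix entries
  have hbound : ∀ (k l : ℕ) (n : ℕ), (n : ℝ) ≤ max (γ k) (γ l) →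
      f (k, l) ≤ (M / ((n : ℝ) + 2) ^ (p + 1)) ^ 2 := by
    intro k l n hn
    have hmax0 : (0:ℝ) ≤ max (γ k) (γ l) := le_trans (hγ k) (le_max_left _ _)
    have hden : (0:ℝ) < ((n : ℝ) + 2) ^ (p + 1) :=
      Real.rpow_pos_of_pos (by positivity) _
    have h1 : ((n : ℝ) + 2) ^ (p + 1) ≤ (2 + max (γ k) (γ l)) ^ (p + 1) :=
      Real.rpow_le_rpow (by positivity) (by linarith) (by linarith)
    have h2 : |(G (v k)) (v l)| ≤ M / ((n : ℝ) + 2) ^ (p + 1) := by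
      rw [le_div_iff₀ hden]
      calc |(G (v k)) (v l)| * ((n : ℝ) + 2) ^ (p + 1)
          ≤ |(G (v k)) (v l)| * (2 + max (γ k) (γ l)) ^ (p + 1) := by
            exact mul_le_mul_of_nonneg_left h1 (abs_nonneg _)
        _ ≤ M := hM k l
    calc f (k, l) = |(G (v k)) (v l)| ^ 2 := (sq_abs _).symm
      _ ≤ (M / ((n : ℝ) + 2) ^ (p + 1)) ^ 2 :=
          pow_le_pow_left₀ (abs_nonneg _) h2 2
  -- key finset bound
  have key : ∀ s : Finset (ℕ × ℕ), ∑ q ∈ s, f q ≤ C₂ ^ 2 * M ^ 2 * T := by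
    intro s
    set g : ℕ × ℕ → ℕ := fun q => ⌊max (γ q.1) (γ q.2)⌋₊ with hgdef
    have hmaps : ∀ q ∈ s, g q ∈ s.image g := fun q hq => Finset.mem_image_of_mem g hq
    rw [← Finset.sum_fiberwise_of_maps_to hmaps]
    have inner : ∀ n ∈ s.image g,
        ∑ q ∈ s.filter (fun q => g q = n), f q
          ≤ C₂ ^ 2 * M ^ 2 * (((n : ℝ) + 2) ^ 2)⁻¹ := by
      intro n _
      have hc0 : (0:ℝ) < (n : ℝ) + 2 := by positivity
      set A := (hcount (n + 1)).1.toFinset with hAdef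
      have hAcard : (A.card : ℝ) ≤ C₂ * ((n : ℝ) + 2) ^ p := by
        have h2 := (hcount (n + 1)).2
        rw [Set.ncard_eq_toFinset_card _ (hcount (n + 1)).1] at h2
        calc (A.card : ℝ) ≤ C₂ * (1 + ((n + 1 : ℕ) : ℝ)) ^ p := h2
          _ = C₂ * ((n : ℝ) + 2) ^ p := by push_cast; ring_nf
      have hsub : s.filter (fun q => g q = n) ⊆ A ×ˢ A := by
        intro q hq
        simp only [Finset.mem_filter] at hq
        have hgq : ⌊max (γ q.1) (γ q.2)⌋₊ = n := hq.2
        have hlt : max (γ q.1) (γ q.2) < (n : ℝ) + 1 := by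
          have h3 := Nat.lt_floor_add_one (max (γ q.1) (γ q.2))
          rw [hgq] at h3
          exact_mod_cast h3
        have hle : ((n : ℝ) + 1) = ((n + 1 : ℕ) : ℝ) := by push_cast; ring
        rw [Finset.mem_product]
        constructor
        · rw [hAdef, Set.Finite.mem_toFinset]
          show γ q.1 ≤ ((n + 1 : ℕ) : ℝ)
          rw [← hle]
          exact le_of_lt (lt_of_le_of_lt (le_max_left _ _) hlt)
        · rw [hAdef, Set.Finite.mem_toFinset]
          show γ q.2 ≤ ((n + 1 : ℕ) : ℝ)
          rw [← hle]
          exact le_of_lt (lt_of_le_of_lt (le_max_right _ _) hlt)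
      have hcard : (((s.filter (fun q => g q = n)).card : ℝ))
          ≤ (C₂ * ((n : ℝ) + 2) ^ p) ^ 2 := by
        have h1 := Finset.card_le_card hsub
        rw [Finset.card_product] at h1
        have h1' : (((s.filter (fun q => g q = n)).card : ℝ)) ≤ (A.card : ℝ) * A.card := by
          exact_mod_cast h1
        calc (((s.filter (fun q => g q = n)).card : ℝ)) ≤ (A.card : ℝ) * A.card := h1'
          _ ≤ (C₂ * ((n : ℝ) + 2) ^ p) * (C₂ * ((n : ℝ) + 2) ^ p) :=
              mul_le_mul hAcard hAcard (Nat.cast_nonneg _) (by positivity)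
          _ = (C₂ * ((n : ℝ) + 2) ^ p) ^ 2 := (sq _).symm
      have hterm : ∀ q ∈ s.filter (fun q => g q = n),
          f q ≤ (M / ((n : ℝ) + 2) ^ (p + 1)) ^ 2 := by
        intro q hq
        simp only [Finset.mem_filter] at hq
        have hmax0 : (0:ℝ) ≤ max (γ q.1) (γ q.2) := le_trans (hγ q.1) (le_max_left _ _)
        have hgq : ⌊max (γ q.1) (γ q.2)⌋₊ = n := hq.2
        have h4 : ((⌊max (γ q.1) (γ q.2)⌋₊ : ℕ) : ℝ) ≤ max (γ q.1) (γ q.2) :=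
          Nat.floor_le hmax0
        rw [hgq] at h4
        exact hbound q.1 q.2 n h4
      calc ∑ q ∈ s.filter (fun q => g q = n), f q
          ≤ (s.filter (fun q => g q = n)).card • (M / ((n : ℝ) + 2) ^ (p + 1)) ^ 2 :=
            Finset.sum_le_card_nsmul _ _ _ hterm
        _ = (((s.filter (fun q => g q = n)).card : ℝ)) * (M / ((n : ℝ) + 2) ^ (p + 1)) ^ 2 :=
            nsmul_eq_mul _ _
        _ ≤ (C₂ * ((n : ℝ) + 2) ^ p) ^ 2 * (M / ((n : ℝ) + 2) ^ (p + 1)) ^ 2 :=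
            mul_le_mul_of_nonneg_right hcard (by positivity)
        _ = C₂ ^ 2 * M ^ 2 * (((n : ℝ) + 2) ^ (p * 2) / ((n : ℝ) + 2) ^ ((p + 1) * 2)) := by
            rw [mul_pow, div_pow,
              ← Real.rpow_natCast (((n : ℝ) + 2) ^ p) 2, ← Real.rpow_mul hc0.le,
              ← Real.rpow_natCast (((n : ℝ) + 2) ^ (p + 1)) 2, ← Real.rpow_mul hc0.le]
            push_cast
            ring
        _ = C₂ ^ 2 * M ^ 2 * (((n : ℝ) + 2) ^ 2)⁻¹ := by
            rw [← Real.rpow_sub hc0,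
              show p * 2 - (p + 1) * 2 = -((2 : ℕ) : ℝ) by push_cast; ring,
              Real.rpow_neg hc0.le, Real.rpow_natCast]
    calc ∑ n ∈ s.image g, ∑ q ∈ s.filter (fun q => g q = n), f q
        ≤ ∑ n ∈ s.image g, C₂ ^ 2 * M ^ 2 * (((n : ℝ) + 2) ^ 2)⁻¹ :=
          Finset.sum_le_sum inner
      _ = C₂ ^ 2 * M ^ 2 * ∑ n ∈ s.image g, (((n : ℝ) + 2) ^ 2)⁻¹ := by
          rw [Finset.mul_sum]
      _ ≤ C₂ ^ 2 * M ^ 2 * T :=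
          mul_le_mul_of_nonneg_left
            (Summable.sum_le_tsum _ (fun i _ => by positivity) hTsum) (by positivity)
  have hfsum : Summable f := summable_of_sum_le (fun q => hf0 q) key
  have hfts : ∑' q, f q ≤ C₂ ^ 2 * M ^ 2 * T := Summable.tsum_le_of_sum_le hfsum key
  -- Riesz representatives of the rows
  set w : ℕ → H := fun l =>
    (InnerProductSpace.toDual ℝ H).symm
      (((ContinuousLinearMap.apply ℝ ℝ (v l)).comp G)) with hwdef
  have hwapp : ∀ (l : ℕ) (x : H), ⟪w l, x⟫ = (G x) (v l) := by
    intro l x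
    rw [hwdef]
    rw [InnerProductSpace.toDual_symm_apply]
    rfl
  have hwnorm : ∀ l, HasSum (fun k => f (k, l)) (‖w l‖ ^ 2) := by
    intro l
    have h1 := v.hasSum_inner_mul_inner (w l) (w l)
    have h2 : ∀ k : ℕ, ⟪w l, v k⟫ * ⟪v k, w l⟫ = f (k, l) := by
      intro k
      have e : ⟪v k, w l⟫ = ⟪w l, v k⟫ := real_inner_comm _ _
      rw [e, hwapp l (v k)]
      simp only [hfdef]
      ring
    rw [real_inner_self_eq_norm_sq] at h1
    simp only [h2] at h1
    exact h1
  -- summability of row norms and total bound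
  have hswap : Summable (fun q : ℕ × ℕ => f (q.2, q.1)) := by
    have := ((Equiv.prodComm ℕ ℕ).summable_iff (f := f)).2 hfsum
    exact this
  have houter : Summable (fun l => ‖w l‖ ^ 2) := by
    have h1 := ((summable_prod_of_nonneg (f := fun q : ℕ × ℕ => f (q.2, q.1))
      (fun q => hf0 _)).1 hswap).2
    refine h1.congr fun l => ?_
    exact (hwnorm l).tsum_eq
  have houtsum : ∑' l, ‖w l‖ ^ 2 ≤ C₂ ^ 2 * M ^ 2 * T := by
    have h3 : ∑' q : ℕ × ℕ, f (q.2, q.1) = ∑' q, f q := by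
      exact (Equiv.prodComm ℕ ℕ).tsum_eq f
    calc ∑' l, ‖w l‖ ^ 2 = ∑' (l : ℕ) (k : ℕ), f (k, l) :=
          tsum_congr fun l => ((hwnorm l).tsum_eq).symm
      _ = ∑' q : ℕ × ℕ, f (q.2, q.1) :=
          (Summable.tsum_prod' hswap fun l => (hwnorm l).summable).symm
      _ = ∑' q, f q := h3
      _ ≤ C₂ ^ 2 * M ^ 2 * T := hfts
  -- conclusion via the operator norm bound
  refine ContinuousLinearMap.opNorm_le_bound G
    (mul_nonneg (by positivity) hM0) fun x => ?_
  set z := (InnerProductSpace.toDual ℝ H).symm (G x) with hz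
  have hznorm : ‖G x‖ = ‖z‖ := (LinearIsometryEquiv.norm_map _ _).symm
  have hzc : ∀ l, ⟪z, v l⟫ = (G x) (v l) := fun l =>
    InnerProductSpace.toDual_symm_apply
  have hzsum : HasSum (fun l => ⟪z, v l⟫ ^ 2) (‖z‖ ^ 2) := by
    have h1 := v.hasSum_inner_mul_inner z z
    rw [real_inner_self_eq_norm_sq] at h1
    have h2 : ∀ l, ⟪z, v l⟫ * ⟪v l, z⟫ = ⟪z, v l⟫ ^ 2 := fun l => by
      have e : ⟪v l, z⟫ = ⟪z, v l⟫ := real_inner_comm _ _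
      rw [e]; ring
    simp only [h2] at h1
    exact h1
  have hcoeff : ∀ l, ⟪z, v l⟫ ^ 2 ≤ ‖w l‖ ^ 2 * ‖x‖ ^ 2 := by
    intro l
    rw [hzc l, ← hwapp l x]
    calc (⟪w l, x⟫) ^ 2 = |⟪w l, x⟫| ^ 2 := (sq_abs _).symm
      _ ≤ (‖w l‖ * ‖x‖) ^ 2 :=
          pow_le_pow_left₀ (abs_nonneg _) (abs_real_inner_le_norm _ _) 2
      _ = ‖w l‖ ^ 2 * ‖x‖ ^ 2 := mul_pow _ _ _
  have hzle : ‖z‖ ^ 2 ≤ C₂ ^ 2 * M ^ 2 * T * ‖x‖ ^ 2 := by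
    calc ‖z‖ ^ 2 = ∑' l, ⟪z, v l⟫ ^ 2 := hzsum.tsum_eq.symm
      _ ≤ ∑' l, ‖w l‖ ^ 2 * ‖x‖ ^ 2 :=
          Summable.tsum_le_tsum hcoeff hzsum.summable (houter.mul_right _)
      _ = (∑' l, ‖w l‖ ^ 2) * ‖x‖ ^ 2 := tsum_mul_right
      _ ≤ C₂ ^ 2 * M ^ 2 * T * ‖x‖ ^ 2 :=
          mul_le_mul_of_nonneg_right houtsum (sq_nonneg _)
  have hrhs0 : 0 ≤ C₂ * Real.sqrt T * M * ‖x‖ :=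
    mul_nonneg (mul_nonneg (mul_nonneg hC₂.le (Real.sqrt_nonneg _)) hM0) (norm_nonneg _)
  have hsq : ‖z‖ ^ 2 ≤ (C₂ * Real.sqrt T * M * ‖x‖) ^ 2 := by
    have hre : (C₂ * Real.sqrt T * M * ‖x‖) ^ 2 = C₂ ^ 2 * M ^ 2 * T * ‖x‖ ^ 2 := by
      rw [mul_pow, mul_pow, mul_pow, Real.sq_sqrt hT0]; ring
    rw [hre]; exact hzle
  have hfin : ‖z‖ ≤ C₂ * Real.sqrt T * M * ‖x‖ := by
    have h5 := Real.sqrt_le_sqrt hsq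
    rwa [Real.sqrt_sq (norm_nonneg _), Real.sqrt_sq hrhs0] at h5
  rw [hznorm]
  calc ‖z‖ ≤ C₂ * Real.sqrt T * M * ‖x‖ := hfin
    _ = (C₂ * Real.sqrt T) * M * ‖x‖ := by ring
end

section
/- Let γ : ℕ → [0,∞) and let p, C₂ be positive constants such that for every n ∈ ℕ the number of indices k with γ(k) ≤ n is at most C₂(1+n)^p. Then the double series Σ_{k,l ∈ ℕ} (2 + max{γ(k), γ(l)})^{-(2p+2)} converges, and its sum is at most C₂² Σ_{n=1}^∞ (n+1)^{-2}. -/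
/-- Let `γ : ℕ → [0,∞)` and `p, C₂ > 0` be such that
`#{k : γ(k) ≤ n} ≤ C₂(1+n)^p` for every `n ∈ ℕ`. Then the double series
`Σ_{k,l} (2 + max{γ(k),γ(l)})^{-(2p+2)}` converges and its sum is at most
`C₂² Σ_{n=1}^∞ (n+1)^{-2}`. -/
theorem stmt5 (γ : ℕ → ℝ) (hγ : ∀ k, 0 ≤ γ k)
    (p C₂ : ℝ) (hp : 0 < p) (hC₂ : 0 < C₂)
    (hcount : ∀ n : ℕ, {k : ℕ | γ k ≤ (n : ℝ)}.Finite ∧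
      (({k : ℕ | γ k ≤ (n : ℝ)}.ncard : ℝ) ≤ C₂ * (1 + (n : ℝ)) ^ p)) :
    Summable (fun kl : ℕ × ℕ => (2 + max (γ kl.1) (γ kl.2)) ^ (-(2 * p + 2))) ∧
    (∑' kl : ℕ × ℕ, (2 + max (γ kl.1) (γ kl.2)) ^ (-(2 * p + 2))) ≤
      C₂ ^ 2 * ∑' n : ℕ, (((n : ℝ) + 2) ^ 2)⁻¹ := by
  set f : ℕ × ℕ → ℝ := fun kl => (2 + max (γ kl.1) (γ kl.2)) ^ (-(2 * p + 2)) with hf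
  set g : ℕ → ℝ := fun n => (((n : ℝ) + 2) ^ 2)⁻¹ with hg
  have hm0 : ∀ kl : ℕ × ℕ, 0 ≤ max (γ kl.1) (γ kl.2) := fun kl =>
    le_trans (hγ kl.1) (le_max_left _ _)
  have hf0 : ∀ kl, 0 ≤ f kl := fun kl =>
    Real.rpow_nonneg (by linarith [hm0 kl]) _
  have hg0 : ∀ n, 0 ≤ g n := fun n => by positivity
  have hgsum : Summable g := by
    have h : Summable (fun n : ℕ => ((n : ℝ) ^ 2)⁻¹) := by
      simpa using Real.summable_one_div_nat_rpow.mpr (by norm_num : (1:ℝ) < 2)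
    have := (summable_nat_add_iff 2).mpr h
    apply this.congr
    intro n
    simp only [hg]
    push_cast
    ring_nf
  -- the key finite-sum bound
  have key : ∀ u : Finset (ℕ × ℕ), ∑ x ∈ u, f x ≤ C₂ ^ 2 * ∑' n, g n := by
    intro u
    set F : ℕ × ℕ → ℕ := fun kl => ⌊max (γ kl.1) (γ kl.2)⌋₊ with hF
    have hsplit : ∑ x ∈ u, f x =
        ∑ n ∈ u.image F, ∑ x ∈ u.filter (fun x => F x = n), f x :=
      (Finset.sum_fiberwise_of_maps_to (fun x hx => Finset.mem_image_of_mem F hx) f).symm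
    rw [hsplit]
    have hbound : ∀ n ∈ u.image F,
        ∑ x ∈ u.filter (fun x => F x = n), f x ≤ C₂ ^ 2 * g n := by
      intro n _
      set A := {k : ℕ | γ k ≤ ((n + 1 : ℕ) : ℝ)} with hA
      have hAfin : A.Finite := (hcount (n + 1)).1
      have hAcard : ((A.ncard : ℝ)) ≤ C₂ * ((n : ℝ) + 2) ^ p := by
        have := (hcount (n + 1)).2
        convert this using 3
        push_cast; ring
      -- each term in the fiber is at most (n+2)^(-(2p+2))
      have hterm : ∀ x ∈ u.filter (fun x => F x = n),
          f x ≤ ((n : ℝ) + 2) ^ (-(2 * p + 2)) := by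
        intro x hx
        have hFx : F x = n := (Finset.mem_filter.mp hx).2
        have h1 : (n : ℝ) ≤ max (γ x.1) (γ x.2) := by
          rw [← hFx]; exact Nat.floor_le (hm0 x)
        exact Real.rpow_le_rpow_of_nonpos (by positivity) (by linarith) (by linarith)
      -- the fiber injects into A ×ˢ A
      have hsub : u.filter (fun x => F x = n) ⊆ hAfin.toFinset ×ˢ hAfin.toFinset := by
        intro x hx
        have hFx : F x = n := (Finset.mem_filter.mp hx).2
        have h2 : max (γ x.1) (γ x.2) < (n : ℝ) + 1 := by
          rw [← hFx]; exact Nat.lt_floor_add_one _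
        have h1 : γ x.1 ≤ ((n + 1 : ℕ) : ℝ) := by
          push_cast; exact le_of_lt (lt_of_le_of_lt (le_max_left _ _) h2)
        have h2' : γ x.2 ≤ ((n + 1 : ℕ) : ℝ) := by
          push_cast; exact le_of_lt (lt_of_le_of_lt (le_max_right _ _) h2)
        simp only [Finset.mem_product, Set.Finite.mem_toFinset]
        exact ⟨h1, h2'⟩
      have hcard : ((u.filter (fun x => F x = n)).card : ℝ) ≤ (C₂ * ((n : ℝ) + 2) ^ p) ^ 2 := by
        have h1 : (u.filter (fun x => F x = n)).card ≤ hAfin.toFinset.card ^ 2 := by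
          calc (u.filter (fun x => F x = n)).card
              ≤ (hAfin.toFinset ×ˢ hAfin.toFinset).card := Finset.card_le_card hsub
            _ = hAfin.toFinset.card ^ 2 := by rw [Finset.card_product]; ring
        have h2 : (hAfin.toFinset.card : ℝ) = A.ncard := by
          rw [Set.ncard_eq_toFinset_card A hAfin]
        calc ((u.filter (fun x => F x = n)).card : ℝ)
            ≤ ((hAfin.toFinset.card : ℝ)) ^ 2 := by exact_mod_cast h1
          _ ≤ (C₂ * ((n : ℝ) + 2) ^ p) ^ 2 := by
              apply pow_le_pow_left₀ (by positivity)
              rw [h2]; exact hAcard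
      calc ∑ x ∈ u.filter (fun x => F x = n), f x
          ≤ ∑ _x ∈ u.filter (fun x => F x = n), ((n : ℝ) + 2) ^ (-(2 * p + 2)) :=
            Finset.sum_le_sum hterm
        _ = ((u.filter (fun x => F x = n)).card : ℝ) * ((n : ℝ) + 2) ^ (-(2 * p + 2)) := by
            rw [Finset.sum_const, nsmul_eq_mul]
        _ ≤ (C₂ * ((n : ℝ) + 2) ^ p) ^ 2 * ((n : ℝ) + 2) ^ (-(2 * p + 2)) := by
            apply mul_le_mul_of_nonneg_right hcard (Real.rpow_nonneg (by positivity) _)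
        _ = C₂ ^ 2 * g n := by
            have hx : (0 : ℝ) < (n : ℝ) + 2 := by positivity
            rw [mul_pow, ← Real.rpow_natCast (((n : ℝ) + 2) ^ p) 2,
              ← Real.rpow_mul hx.le, mul_assoc, ← Real.rpow_add hx]
            have : p * (2 : ℕ) + -(2 * p + 2) = (-2 : ℝ) := by push_cast; ring
            rw [this]
            congr 1
            rw [show (-2 : ℝ) = -((2:ℕ):ℝ) by norm_num, Real.rpow_neg hx.le,
              Real.rpow_natCast]
    calc ∑ n ∈ u.image F, ∑ x ∈ u.filter (fun x => F x = n), f x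
        ≤ ∑ n ∈ u.image F, C₂ ^ 2 * g n := Finset.sum_le_sum hbound
      _ = C₂ ^ 2 * ∑ n ∈ u.image F, g n := by rw [Finset.mul_sum]
      _ ≤ C₂ ^ 2 * ∑' n, g n := by
          apply mul_le_mul_of_nonneg_left _ (by positivity)
          exact Summable.sum_le_tsum _ (fun n _ => hg0 n) hgsum
  have hsum : Summable f := summable_of_sum_le hf0 key
  exact ⟨hsum, Summable.tsum_le_of_sum_le hsum key⟩
end

section
/- Fix integers N ≥ 2 and m ≥ 1 and positive constants β and r, and fix x ∈ ℝ^N. Let B'_{N-1}(x,r) = {y ∈ B_N(x,r) : y_N = x_N}, and for a real function f on the closure of B'_{N-1}(x,r) let graph(f) = {y ∈ ℝ^N : y_N = f(y₁,…,y_{N-1},x_N), (y₁,…,y_{N-1},x_N) ∈ closure of B'_{N-1}(x,r)}. For ε > 0 let X_{mβε}(B'_{N-1}(x,r)) be the set of graphs of functions f of class C^m compactly supported in B'_{N-1}(x,r) with ‖f‖_{C^m} ≤ β and x_N ≤ f ≤ x_N + ε, regarded as a metric space with the Hausdorff distance. Then there exists ε₀ > 0, depending on N, m, β and r only, such that for every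 ε with 0 < ε < ε₀ there exists a subset Z_ε of X_{mβε}(B'_{N-1}(x,r)) that is ε-discrete with respect to the Hausdorff distance and has at least exp(2^{-N} ε₀^{(N-1)/m} ε^{-(N-1)/m}) elements. -/
open Metric Set Filter Function Topology

section helpers
variable {E F : Type*} [NormedAddCommGroup E] [NormedSpace ℝ E]
  [NormedAddCommGroup F] [NormedSpace ℝ F]

lemma my_evEq_iteratedFDeriv {f g : E → F} {x : E} (h : f =ᶠ[𝓝 x] g) (n : ℕ) :
    iteratedFDeriv ℝ n f x = iteratedFDeriv ℝ n g x := by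
  rw [← iteratedFDerivWithin_univ, ← iteratedFDerivWithin_univ]
  exact Filter.EventuallyEq.iteratedFDerivWithin_eq (by rwa [nhdsWithin_univ]) h.self_of_nhds n

lemma my_iteratedFDeriv_comp_add_const {f : E → F} (hf : ContDiff ℝ (⊤ : ℕ∞) f) (a : E) (n : ℕ) :
    ∀ x, iteratedFDeriv ℝ n (fun z => f (z + a)) x = iteratedFDeriv ℝ n f (x + a) := by
  induction n with
  | zero => intro x; ext m; simp
  | succ n ih =>
    intro x
    ext m
    rw [iteratedFDeriv_succ_apply_left, iteratedFDeriv_succ_apply_left]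
    have h1 : (iteratedFDeriv ℝ n fun z => f (z + a))
        = fun z => iteratedFDeriv ℝ n f (z + a) := funext ih
    rw [h1]
    have hdiff : Differentiable ℝ (iteratedFDeriv ℝ n f) := by
      apply hf.differentiable_iteratedFDeriv
      exact_mod_cast (show (n:ℕ∞) < ⊤ from WithTop.coe_lt_top n)
    have h2 : HasFDerivAt (fun z : E => iteratedFDeriv ℝ n f (z + a))
        (fderiv ℝ (iteratedFDeriv ℝ n f) (x + a)) x := by
      have h3 : HasFDerivAt (fun z : E => z + a) (ContinuousLinearMap.id ℝ E) x :=
        (hasFDerivAt_id x).add_const a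
      have h4 := (hdiff (x + a)).hasFDerivAt.comp x h3
      rw [ContinuousLinearMap.comp_id] at h4
      exact h4
    rw [h2.fderiv]

lemma my_norm_iteratedFDeriv_scale (φ : E → ℝ) (hφ : ContDiff ℝ (⊤ : ℕ∞) φ)
    {s : ℝ} (hs : 0 < s) (c : E) (i : ℕ) (z : E) :
    ‖iteratedFDeriv ℝ i (fun w => φ (s⁻¹ • (w - c))) z‖
      ≤ s⁻¹ ^ i * ‖iteratedFDeriv ℝ i φ (s⁻¹ • (z - c))‖ := by
  set L : E →L[ℝ] E := s⁻¹ • ContinuousLinearMap.id ℝ E with hL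
  have hLapp : ∀ w, L w = s⁻¹ • w := fun w => rfl
  have hψ : ContDiff ℝ (⊤ : ℕ∞) (φ ∘ L) := hφ.comp_continuousLinearMap (g := L)
  have heq : (fun w => φ (s⁻¹ • (w - c))) = fun w => (φ ∘ L) (w + (-c)) := by
    funext w; simp only [comp_apply, hLapp, sub_eq_add_neg]
  have hle : (i : WithTop ℕ∞) ≤ ((⊤ : ℕ∞) : WithTop ℕ∞) := by exact_mod_cast le_top
  have hcomp := L.iteratedFDeriv_comp_right hφ (z + (-c)) hle
  have hnorm := (iteratedFDeriv ℝ i φ (L (z + (-c)))).norm_compContinuousLinearMap_le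
    (fun _ : Fin i => L)
  have hLnorm : ‖L‖ ≤ s⁻¹ := by
    apply ContinuousLinearMap.opNorm_le_bound _ (inv_nonneg.2 hs.le)
    intro w
    rw [hLapp, norm_smul, Real.norm_eq_abs, abs_of_pos (inv_pos.2 hs)]
  have hpt : L (z + (-c)) = s⁻¹ • (z - c) := by rw [hLapp, sub_eq_add_neg]
  rw [heq, my_iteratedFDeriv_comp_add_const hψ (-c) i z, hcomp]
  calc ‖(iteratedFDeriv ℝ i φ (L (z + -c))).compContinuousLinearMap fun _ => L‖
      ≤ ‖iteratedFDeriv ℝ i φ (L (z + -c))‖ * ∏ _j : Fin i, ‖L‖ := hnorm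
    _ = ‖iteratedFDeriv ℝ i φ (L (z + -c))‖ * ‖L‖ ^ i := by
        rw [Finset.prod_const, Finset.card_univ, Fintype.card_fin]
    _ ≤ ‖iteratedFDeriv ℝ i φ (L (z + -c))‖ * s⁻¹ ^ i := by
        apply mul_le_mul_of_nonneg_left (pow_le_pow_left₀ (norm_nonneg _) hLnorm i)
          (norm_nonneg _)
    _ = s⁻¹ ^ i * ‖iteratedFDeriv ℝ i φ (s⁻¹ • (z - c))‖ := by rw [hpt, mul_comm]

lemma my_coord_le_norm {d : ℕ} (v : EuclideanSpace ℝ (Fin d)) (i : Fin d) : |v i| ≤ ‖v‖ := by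
  rw [EuclideanSpace.norm_eq]
  rw [show |v i| = Real.sqrt (|v i|^2) from (Real.sqrt_sq (abs_nonneg _)).symm]
  apply Real.sqrt_le_sqrt
  have := Finset.single_le_sum (f := fun j => ‖v j‖^2) (fun j _ => by positivity)
    (Finset.mem_univ i)
  simpa [Real.norm_eq_abs, sq_abs] using this

lemma my_norm_le_of_coord {d : ℕ} (hd : 1 ≤ d) (v : EuclideanSpace ℝ (Fin d)) {t : ℝ}
    (ht : 0 ≤ t) (h : ∀ i, |v i| ≤ t) : ‖v‖ ≤ d * t := by
  have hd1 : (1:ℝ) ≤ d := by exact_mod_cast hd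
  rw [EuclideanSpace.norm_eq]
  have h1 : ∑ i : Fin d, ‖v i‖^2 ≤ (d:ℝ) * t^2 := by
    calc ∑ i : Fin d, ‖v i‖^2 ≤ ∑ _i : Fin d, t^2 := Finset.sum_le_sum (fun i _ => by
          rw [Real.norm_eq_abs]
          exact pow_le_pow_left₀ (abs_nonneg _) (h i) 2)
      _ = (d:ℝ) * t^2 := by
          rw [Finset.sum_const, Finset.card_univ, Fintype.card_fin, nsmul_eq_mul]
  calc Real.sqrt (∑ i, ‖v i‖^2) ≤ Real.sqrt (((d:ℝ)*t)^2) :=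
        Real.sqrt_le_sqrt (by nlinarith)
    _ = (d:ℝ)*t := Real.sqrt_sq (by positivity)

end helpers

set_option maxHeartbeats 2000000 in
theorem stmt6_aux (d mm : ℕ) (hd : 1 ≤ d) (hm : 1 ≤ mm) (β r : ℝ) (hβ : 0 < β) (hr : 0 < r)
    (x' : EuclideanSpace ℝ (Fin d)) (xN : ℝ) :
    ∃ ε₀ : ℝ, 0 < ε₀ ∧ ∀ ε : ℝ, 0 < ε → ε < ε₀ →
      ∃ Z : Finset (Set (WithLp 2 (EuclideanSpace ℝ (Fin d) × ℝ))),
        (∀ S ∈ Z, ∃ f : EuclideanSpace ℝ (Fin d) → ℝ,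
          ContDiff ℝ mm f ∧
          tsupport (fun z => f z - xN) ⊆ Metric.ball x' r ∧
          (∀ i ≤ mm, ∀ z, ‖iteratedFDeriv ℝ i (fun z => f z - xN) z‖ ≤ β) ∧
          (∀ z, xN ≤ f z ∧ f z ≤ xN + ε) ∧
          S = (fun z => (WithLp.equiv 2 (EuclideanSpace ℝ (Fin d) × ℝ)).symm (z, f z)) ''
                Metric.closedBall x' r) ∧
        (∀ S ∈ Z, ∀ T ∈ Z, S ≠ T → ε ≤ Metric.hausdorffDist S T) ∧
        Real.exp (2 ^ (-(d:ℝ) - 1) * ε₀ ^ ((d:ℝ)/mm) * ε ^ (-((d:ℝ)/mm)))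
          ≤ (Z.card : ℝ) := by
  classical
  have hdR : (0:ℝ) < d := by exact_mod_cast hd
  have hdR1 : (1:ℝ) ≤ d := by exact_mod_cast hd
  have hmR : (0:ℝ) < mm := by exact_mod_cast hm
  -- the bump function
  set φ : ContDiffBump (0 : EuclideanSpace ℝ (Fin d)) := ⟨1, 2, one_pos, one_lt_two⟩ with hφdef
  have hφC : ContDiff ℝ (⊤:ℕ∞) (fun y => φ y) := φ.contDiff
  have hbd : ∀ i : ℕ, ∃ C, ∀ y, ‖iteratedFDeriv ℝ i (fun y => φ y) y‖ ≤ C := fun i =>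
    (φ.hasCompactSupport.iteratedFDeriv i).exists_bound_of_continuous
      (hφC.continuous_iteratedFDeriv (by exact_mod_cast le_top))
  choose C hC using hbd
  set Mφ : ℝ := 1 + ∑ i ∈ Finset.range (mm+1), |C i| with hMφdef
  have hMφ1 : 1 ≤ Mφ := by
    rw [hMφdef]
    have : (0:ℝ) ≤ ∑ i ∈ Finset.range (mm+1), |C i| :=
      Finset.sum_nonneg fun i _ => abs_nonneg _
    linarith
  have hMφ0 : (0:ℝ) < Mφ := lt_of_lt_of_le one_pos hMφ1
  have hMφ : ∀ i ≤ mm, ∀ y, ‖iteratedFDeriv ℝ i (fun y => φ y) y‖ ≤ Mφ := by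
    intro i hi y
    calc ‖iteratedFDeriv ℝ i (fun y => φ y) y‖ ≤ C i := hC i y
      _ ≤ |C i| := le_abs_self _
      _ ≤ ∑ j ∈ Finset.range (mm+1), |C j| :=
          Finset.single_le_sum (fun j _ => abs_nonneg (C j)) (Finset.mem_range.2 (by omega))
      _ ≤ Mφ := by rw [hMφdef]; linarith
  set K₀ : ℝ := max 1 ((Mφ/β) ^ (1/(mm:ℝ))) with hK₀def
  have hK₀1 : (1:ℝ) ≤ K₀ := le_max_left _ _
  have hK₀0 : (0:ℝ) < K₀ := lt_of_lt_of_le one_pos hK₀1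
  set ρ : ℝ := min 1 (r/(24*d)) with hρdef
  have hρ0 : (0:ℝ) < ρ := lt_min one_pos (by positivity)
  set c₁ : ℝ := r / (24 * d * K₀) with hc₁def
  have hc₁0 : (0:ℝ) < c₁ := by rw [hc₁def]; positivity
  set c₂ : ℝ := 2^(d+1) * c₁^d * Real.log 2 with hc₂def
  have hlog2 : (0:ℝ) < Real.log 2 := Real.log_pos one_lt_two
  have hc₂0 : (0:ℝ) < c₂ := by rw [hc₂def]; positivity
  set ε₀ : ℝ := min (min 1 ((ρ/K₀)^mm)) (c₂ ^ ((mm:ℝ)/d)) with hε₀def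
  have hε₀0 : 0 < ε₀ := by
    apply lt_min (lt_min one_pos (by positivity)) (Real.rpow_pos_of_pos hc₂0 _)
  refine ⟨ε₀, hε₀0, ?_⟩
  intro ε hε hεlt
  have hε1 : ε < 1 := lt_of_lt_of_le hεlt ((min_le_left _ _).trans (min_le_left _ _))
  -- the scale δ
  set δ : ℝ := max ε ((Mφ * ε / β) ^ (1/(mm:ℝ))) with hδdef
  have hεδ : ε ≤ δ := le_max_left _ _
  have hδ0 : 0 < δ := lt_of_lt_of_le hε hεδ
  have hmm0 : (mm:ℝ) ≠ 0 := ne_of_gt hmR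
  have hbase : ((Mφ * ε / β) ^ (1/(mm:ℝ))) ^ mm = Mφ * ε / β := by
    rw [← Real.rpow_natCast ((Mφ * ε / β) ^ (1/(mm:ℝ))) mm, ← Real.rpow_mul (by positivity),
      one_div, inv_mul_cancel₀ hmm0, Real.rpow_one]
  have hδm : Mφ * ε / β ≤ δ ^ mm := by
    rw [← hbase]
    exact pow_le_pow_left₀ (by positivity) (le_max_right _ _) mm
  have hεr : 0 < ε ^ (1/(mm:ℝ)) := Real.rpow_pos_of_pos hε _
  have h1m : 1/(mm:ℝ) ≤ 1 := by
    rw [div_le_one hmR]; exact_mod_cast hm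
  have hδ_le : δ ≤ K₀ * ε ^ (1/(mm:ℝ)) := by
    apply max_le
    · calc ε = ε ^ (1:ℝ) := (Real.rpow_one ε).symm
        _ ≤ ε ^ (1/(mm:ℝ)) := Real.rpow_le_rpow_of_exponent_ge hε hε1.le h1m
        _ ≤ K₀ * ε ^ (1/(mm:ℝ)) := le_mul_of_one_le_left hεr.le hK₀1
    · rw [show Mφ * ε / β = (Mφ/β) * ε by ring, Real.mul_rpow (by positivity) hε.le]
      exact mul_le_mul_of_nonneg_right (le_max_right 1 _) hεr.le
  have hρK : (((ρ/K₀)^mm : ℝ)) ^ (1/(mm:ℝ)) = ρ/K₀ := by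
    rw [← Real.rpow_natCast (ρ/K₀) mm, ← Real.rpow_mul (by positivity), mul_one_div,
      div_self hmm0, Real.rpow_one]
  have hδρ : δ ≤ ρ := by
    refine hδ_le.trans ?_
    have h2 : ε ^ (1/(mm:ℝ)) ≤ ρ/K₀ := by
      rw [← hρK]
      exact Real.rpow_le_rpow hε.le
        (hεlt.le.trans ((min_le_left _ _).trans (min_le_right _ _))) (by positivity)
    calc K₀ * ε^(1/(mm:ℝ)) ≤ K₀ * (ρ/K₀) := mul_le_mul_of_nonneg_left h2 hK₀0.le
      _ = ρ := by field_simp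
  have hδ1 : δ ≤ 1 := hδρ.trans (min_le_left _ _)
  have hδr : 24 * d * δ ≤ r := by
    have h3 : δ ≤ r/(24*d) := hδρ.trans (min_le_right _ _)
    rw [le_div_iff₀ (by positivity)] at h3
    linarith
  -- the grid size
  set M : ℕ := ⌊r / (12 * d * δ)⌋₊ with hMdef
  have hv2 : (2:ℝ) ≤ r / (12 * d * δ) := by
    rw [le_div_iff₀ (by positivity)]; nlinarith
  have hM2 : 2 ≤ M := Nat.le_floor (by exact_mod_cast hv2)
  have hM0 : 0 < M := by omega
  have hMle : (M:ℝ) ≤ r / (12*d*δ) := Nat.floor_le (by positivity)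
  have hMge : r / (24*d*δ) ≤ (M:ℝ) := by
    have h4 := Nat.sub_one_lt_floor (r / (12*d*δ))
    have h5 : r/(24*(d:ℝ)*δ) = (r/(12*d*δ))/2 := by
      rw [div_div]
      congr 1
      ring
    rw [h5]
    rw [← hMdef] at h4
    linarith
  -- the grid
  set vec : (Fin d → Fin M) → EuclideanSpace ℝ (Fin d) := fun k =>
    (WithLp.equiv 2 (Fin d → ℝ)).symm (fun i => ((k i : ℕ) : ℝ)) with hvecdef
  have hveci : ∀ k i, vec k i = ((k i : ℕ) : ℝ) := fun k i => rfl
  set pt : (Fin d → Fin M) → EuclideanSpace ℝ (Fin d) := fun k => x' + (6*δ) • vec k with hptdef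
  have hsep : ∀ k j, k ≠ j → 6*δ ≤ dist (pt k) (pt j) := by
    intro k j hkj
    have hex : ∃ i, k i ≠ j i := by
      by_contra h; push_neg at h; exact hkj (funext h)
    obtain ⟨i, hi⟩ := hex
    have h6 : (1:ℝ) ≤ |((k i : ℕ) : ℝ) - ((j i : ℕ) : ℝ)| := by
      have hne : (k i : ℕ) ≠ (j i : ℕ) := fun h => hi (Fin.ext h)
      rcases lt_or_gt_of_ne hne with h' | h'
      · have h'' : ((k i : ℕ) : ℝ) + 1 ≤ ((j i : ℕ) : ℝ) := by exact_mod_cast h'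
        rw [abs_sub_comm, abs_of_nonneg (by linarith)]
        linarith
      · have h'' : ((j i : ℕ) : ℝ) + 1 ≤ ((k i : ℕ) : ℝ) := by exact_mod_cast h'
        rw [abs_of_nonneg (by linarith)]
        linarith
    have h7 : dist (pt k) (pt j) = 6*δ * ‖vec k - vec j‖ := by
      rw [hptdef, dist_eq_norm]
      rw [show x' + (6*δ) • vec k - (x' + (6*δ) • vec j) = (6*δ) • (vec k - vec j) by
        rw [smul_sub]; abel]
      rw [norm_smul, Real.norm_eq_abs, abs_of_pos (by positivity)]
    rw [h7]
    have h8 : (1:ℝ) ≤ ‖vec k - vec j‖ := by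
      refine le_trans ?_ (my_coord_le_norm (vec k - vec j) i)
      rw [PiLp.sub_apply, hveci, hveci]
      exact h6
    nlinarith
  have hnear : ∀ k, dist (pt k) x' ≤ r/2 := by
    intro k
    have h9 : ‖vec k‖ ≤ (d:ℝ) * M := by
      apply my_norm_le_of_coord hd _ (by positivity)
      intro i
      rw [hveci, abs_of_nonneg (by positivity)]
      exact Nat.cast_le.mpr (k i).2.le
    have h10 : dist (pt k) x' = 6*δ * ‖vec k‖ := by
      rw [hptdef, dist_eq_norm, add_sub_cancel_left, norm_smul, Real.norm_eq_abs,
        abs_of_pos (by positivity)]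
    rw [h10]
    have h11 : 12 * (d:ℝ) * δ * M ≤ r := by
      have h12 := (le_div_iff₀ (show (0:ℝ) < 12*d*δ by positivity)).1 hMle
      linarith
    nlinarith [mul_le_mul_of_nonneg_left h9 (show (0:ℝ) ≤ 6*δ by positivity)]
  -- the bumps
  set b : (Fin d → Fin M) → EuclideanSpace ℝ (Fin d) → ℝ :=
    fun k z => φ (δ⁻¹ • (z - pt k)) with hbdef
  have hbC : ∀ k, ContDiff ℝ (⊤:ℕ∞) (b k) := by
    intro k
    exact hφC.comp ((contDiff_id.sub contDiff_const).const_smul δ⁻¹)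
  have hb0 : ∀ k z, 2*δ ≤ dist z (pt k) → b k z = 0 := by
    intro k z h
    apply φ.zero_of_le_dist
    show (2:ℝ) ≤ dist (δ⁻¹ • (z - pt k)) 0
    rw [dist_zero_right, norm_smul, Real.norm_eq_abs, abs_of_pos (inv_pos.2 hδ0),
      ← dist_eq_norm]
    calc (2:ℝ) = δ⁻¹ * (2*δ) := by field_simp
      _ ≤ δ⁻¹ * dist z (pt k) := mul_le_mul_of_nonneg_left h (by positivity)
  have hb1 : ∀ k, b k (pt k) = 1 := by
    intro k
    apply φ.one_of_mem_closedBall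
    rw [hφdef]
    show δ⁻¹ • (pt k - pt k) ∈ closedBall 0 1
    simp
  have hbnn : ∀ k z, 0 ≤ b k z := fun k z => φ.nonneg
  have hble : ∀ k z, b k z ≤ 1 := fun k z => φ.le_one
  have hbsupp : ∀ k z, b k z ≠ 0 → dist z (pt k) < 2*δ := by
    intro k z h
    by_contra h'
    exact h (hb0 k z (not_lt.1 h'))
  -- the key locality lemma
  have key : ∀ (A : Finset (Fin d → Fin M)) (z : EuclideanSpace ℝ (Fin d)),
      (∀ w ∈ Metric.ball z δ, ∑ j ∈ A, b j w = 0) ∨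
      (∃ k ∈ A, ∀ w ∈ Metric.ball z δ, ∑ j ∈ A, b j w = b k w) := by
    intro A z
    set J := A.filter (fun j => dist z (pt j) < 3*δ) with hJ
    have hout : ∀ w ∈ Metric.ball z δ, ∀ j ∈ A, j ∉ J → b j w = 0 := by
      intro w hw j hjA hjJ
      apply hb0
      have h3 : 3*δ ≤ dist z (pt j) := by
        by_contra h; push_neg at h; exact hjJ (Finset.mem_filter.2 ⟨hjA, h⟩)
      have htri := dist_triangle z w (pt j)
      have hzw : dist z w < δ := by rw [dist_comm]; exact hw
      linarith
    have hsum : ∀ w ∈ Metric.ball z δ, ∑ j ∈ A, b j w = ∑ j ∈ J, b j w := by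
      intro w hw
      exact (Finset.sum_subset (Finset.filter_subset _ _)
        (fun j hj hjJ => hout w hw j hj hjJ)).symm
    rcases J.eq_empty_or_nonempty with hJe | ⟨k, hk⟩
    · left; intro w hw; rw [hsum w hw, hJe, Finset.sum_empty]
    · right
      refine ⟨k, (Finset.mem_filter.1 hk).1, fun w hw => ?_⟩
      rw [hsum w hw]
      apply Finset.sum_eq_single_of_mem k hk
      intro j hjJ hjk
      exfalso
      have hj2 := (Finset.mem_filter.1 hjJ).2
      have hk2 := (Finset.mem_filter.1 hk).2
      have hsep' := hsep j k hjk
      have htri := dist_triangle (pt j) z (pt k)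
      have hcomm : dist (pt j) z = dist z (pt j) := dist_comm _ _
      linarith
  -- the functions
  set f : Finset (Fin d → Fin M) → EuclideanSpace ℝ (Fin d) → ℝ :=
    fun A z => xN + ε * ∑ k ∈ A, b k z with hfdef
  have hpert : ∀ A, (fun z => f A z - xN) = fun z => ε * ∑ k ∈ A, b k z := by
    intro A; funext z; rw [hfdef]; ring
  have hsum01 : ∀ A z, 0 ≤ (∑ k ∈ A, b k z) ∧ (∑ k ∈ A, b k z) ≤ 1 := by
    intro A z
    refine ⟨Finset.sum_nonneg fun k _ => hbnn k z, ?_⟩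
    rcases key A z with h | ⟨k, _, h⟩
    · rw [h z (mem_ball_self hδ0)]; exact zero_le_one
    · rw [h z (mem_ball_self hδ0)]; exact hble k z
  have hfCtop : ∀ A, ContDiff ℝ (⊤:ℕ∞) (f A) := by
    intro A
    rw [hfdef]
    exact contDiff_const.add (contDiff_const.mul (ContDiff.sum fun k _ => hbC k))
  -- support
  have hsupp : ∀ A, tsupport (fun z => f A z - xN) ⊆ Metric.ball x' r := by
    intro A
    rw [hpert A]
    have h1 : Function.support (fun z => ε * ∑ k ∈ A, b k z)
        ⊆ Metric.closedBall x' (r/2 + 2*δ) := by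
      intro z hz
      rw [Function.mem_support] at hz
      have h2 : ∑ k ∈ A, b k z ≠ 0 := fun h => hz (by rw [h, mul_zero])
      obtain ⟨k, hkA, hk⟩ := Finset.exists_ne_zero_of_sum_ne_zero h2
      have h3 : dist z (pt k) < 2*δ := hbsupp k z hk
      have h4 := hnear k
      rw [mem_closedBall]
      calc dist z x' ≤ dist z (pt k) + dist (pt k) x' := dist_triangle _ _ _
        _ ≤ r/2 + 2*δ := by linarith
    have h5 : Metric.closedBall x' (r/2 + 2*δ) ⊆ Metric.ball x' r := by
      apply closedBall_subset_ball
      nlinarith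
    exact (closure_minimal h1 Metric.isClosed_closedBall).trans h5
  -- derivative bounds
  have hderiv : ∀ A, ∀ i ≤ mm, ∀ z, ‖iteratedFDeriv ℝ i (fun z => f A z - xN) z‖ ≤ β := by
    intro A i hi z
    rw [hpert A]
    rcases key A z with h | ⟨k, hkA, h⟩
    · have hev : (fun w => ε * ∑ k ∈ A, b k w) =ᶠ[𝓝 z] (fun _ => (0:ℝ)) := by
        filter_upwards [Metric.ball_mem_nhds z hδ0] with w hw
        rw [h w hw, mul_zero]
      rw [my_evEq_iteratedFDeriv hev i, iteratedFDeriv_zero_fun]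
      simp [hβ.le]
    · have hev : (fun w => ε * ∑ j ∈ A, b j w) =ᶠ[𝓝 z] (fun w => ε * b k w) := by
        filter_upwards [Metric.ball_mem_nhds z hδ0] with w hw
        rw [h w hw]
      rw [my_evEq_iteratedFDeriv hev i]
      have hsm : (fun w => ε * b k w) = ε • (b k) := by
        funext w; simp [smul_eq_mul]
      rw [hsm, iteratedFDeriv_const_smul_apply (((hbC k).of_le (by exact_mod_cast le_top) : ContDiff ℝ i (b k)).contDiffAt)]
      rw [norm_smul, Real.norm_eq_abs, abs_of_pos hε]
      have hscale := my_norm_iteratedFDeriv_scale (fun y => φ y) hφC hδ0 (pt k) i z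
      have hbk : ‖iteratedFDeriv ℝ i (b k) z‖ ≤ δ⁻¹ ^ i * Mφ := by
        refine hscale.trans ?_
        exact mul_le_mul_of_nonneg_left (hMφ i hi _) (by positivity)
      have hδinv1 : (1:ℝ) ≤ δ⁻¹ := by
        have hmc : δ * δ⁻¹ = 1 := mul_inv_cancel₀ hδ0.ne'
        nlinarith [inv_pos.2 hδ0]
      have h1 : δ⁻¹ ^ i ≤ δ⁻¹ ^ mm := pow_le_pow_right₀ hδinv1 hi
      have hpow : (0:ℝ) < δ ^ mm := pow_pos hδ0 mm
      have h2 : ε * (δ⁻¹ ^ mm * Mφ) ≤ β := by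
        rw [inv_pow, show ε * ((δ^mm)⁻¹ * Mφ) = Mφ * ε / δ^mm by field_simp,
          div_le_iff₀ hpow]
        rw [div_le_iff₀ hβ] at hδm
        nlinarith
      calc ε * ‖iteratedFDeriv ℝ i (b k) z‖ ≤ ε * (δ⁻¹ ^ i * Mφ) :=
            mul_le_mul_of_nonneg_left hbk hε.le
        _ ≤ ε * (δ⁻¹ ^ mm * Mφ) := by
            apply mul_le_mul_of_nonneg_left _ hε.le
            exact mul_le_mul_of_nonneg_right h1 hMφ0.le
        _ ≤ β := h2
  -- peak and vanishing values
  have hpeak : ∀ A k, k ∈ A → f A (pt k) = xN + ε := by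
    intro A k hk
    have h1 : ∑ j ∈ A, b j (pt k) = 1 := by
      rw [Finset.sum_eq_single_of_mem k hk, hb1 k]
      intro j hj hjk
      apply hb0
      have := hsep j k hjk
      have hcomm : dist (pt k) (pt j) = dist (pt j) (pt k) := dist_comm _ _
      linarith
    rw [hfdef]
    simp only [h1, mul_one]
  have hvanish : ∀ B k, k ∉ B → ∀ z, dist z (pt k) < δ → f B z = xN := by
    intro B k hk z hz
    have h1 : ∑ j ∈ B, b j z = 0 := by
      apply Finset.sum_eq_zero
      intro j hj
      apply hb0
      have hjk : j ≠ k := fun h => hk (h ▸ hj)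
      have := hsep j k hjk
      have htri := dist_triangle (pt j) z (pt k)
      have hcomm : dist (pt j) z = dist z (pt j) := dist_comm _ _
      linarith
    rw [hfdef]
    simp only [h1, mul_zero, add_zero]
  -- the graphs
  set emb : Finset (Fin d → Fin M) → EuclideanSpace ℝ (Fin d)
      → WithLp 2 (EuclideanSpace ℝ (Fin d) × ℝ) :=
    fun A z => (WithLp.equiv 2 (EuclideanSpace ℝ (Fin d) × ℝ)).symm (z, f A z) with hembdef
  set Gr : Finset (Fin d → Fin M) → Set (WithLp 2 (EuclideanSpace ℝ (Fin d) × ℝ)) :=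
    fun A => emb A '' Metric.closedBall x' r with hGrdef
  have hdistpair : ∀ (z w : EuclideanSpace ℝ (Fin d)) (a c : ℝ),
      dist ((WithLp.equiv 2 (EuclideanSpace ℝ (Fin d) × ℝ)).symm (z,a))
        ((WithLp.equiv 2 (EuclideanSpace ℝ (Fin d) × ℝ)).symm (w,c))
        = Real.sqrt (dist z w ^2 + dist a c ^2) := fun z w a c =>
    WithLp.prod_dist_eq_of_L2 _ _
  have hlower : ∀ (B : Finset (Fin d → Fin M)) k, k ∉ B → ∀ q ∈ Gr B,
      ε ≤ dist ((WithLp.equiv 2 (EuclideanSpace ℝ (Fin d) × ℝ)).symm (pt k, xN + ε)) q := by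
    intro B k hkB q hq
    obtain ⟨z, _, rfl⟩ := hq
    rw [hembdef]
    rw [hdistpair]
    rcases le_or_gt ε (dist (pt k) z) with hca | hca
    · rw [Real.le_sqrt hε.le (by positivity)]
      nlinarith [dist_nonneg (x := (xN+ε)) (y := f B z), dist_nonneg (x := pt k) (y := z)]
    · have hz : f B z = xN := by
        apply hvanish B k hkB z
        rw [dist_comm]
        exact lt_of_lt_of_le hca hεδ
      rw [hz]
      have : dist (xN + ε) xN = ε := by
        rw [Real.dist_eq]; rw [abs_of_pos]; ring_nf; linarith
      rw [this]
      rw [Real.le_sqrt hε.le (by positivity)]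
      nlinarith [dist_nonneg (x := pt k) (y := z)]
  have hptball : ∀ k, pt k ∈ Metric.closedBall x' r := by
    intro k
    rw [mem_closedBall]
    have := hnear k
    linarith
  have hmem : ∀ A k, emb A (pt k) ∈ Gr A := fun A k => ⟨pt k, hptball k, rfl⟩
  have hk0 : ∃ k0 : Fin d → Fin M, True := ⟨fun _ => ⟨0, hM0⟩, trivial⟩
  obtain ⟨k0, -⟩ := hk0
  have hGrne : ∀ A, (Gr A).Nonempty := fun A => ⟨_, hmem A k0⟩
  have hGrcompact : ∀ A, IsCompact (Gr A) := by
    intro A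
    apply (isCompact_closedBall x' r).image
    exact (WithLp.prodContinuousLinearEquiv 2 ℝ (EuclideanSpace ℝ (Fin d)) ℝ).symm.continuous.comp
      (continuous_id.prodMk (hfCtop A).continuous)
  have hfin : ∀ A B, EMetric.hausdorffEdist (Gr A) (Gr B) ≠ ⊤ := fun A B =>
    Metric.hausdorffEdist_ne_top_of_nonempty_of_bounded (hGrne A) (hGrne B)
      (hGrcompact A).isBounded (hGrcompact B).isBounded
  have hembpeak : ∀ A k, k ∈ A →
      emb A (pt k) = (WithLp.equiv 2 (EuclideanSpace ℝ (Fin d) × ℝ)).symm (pt k, xN + ε) := by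
    intro A k hk
    simp only [hembdef]
    rw [hpeak A k hk]
  have hne : ∀ A B k, k ∈ A → k ∉ B → Gr A ≠ Gr B := by
    intro A B k hkA hkB heq
    have h1 : emb A (pt k) ∈ Gr B := heq ▸ hmem A k
    have h2 := hlower B k hkB _ h1
    rw [hembpeak A k hkA, dist_self] at h2
    linarith
  have hdiff_exists : ∀ A B : Finset (Fin d → Fin M), A ≠ B →
      ∃ k, (k ∈ A ∧ k ∉ B) ∨ (k ∈ B ∧ k ∉ A) := by
    intro A B hAB
    by_contra h
    push_neg at h
    apply hAB
    ext k
    have := h k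
    tauto
  have hGrinj : Function.Injective Gr := by
    intro A B heq
    by_contra hAB
    obtain ⟨k, hk | hk⟩ := hdiff_exists A B hAB
    · exact hne A B k hk.1 hk.2 heq
    · exact hne B A k hk.1 hk.2 heq.symm
  have hhausmain : ∀ A B k, k ∈ A → k ∉ B → ε ≤ Metric.hausdorffDist (Gr A) (Gr B) := by
    intro A B k hkA hkB
    have hy : emb A (pt k) ∈ Gr A := hmem A k
    have hinf : ε ≤ Metric.infDist (emb A (pt k)) (Gr B) := by
      by_contra h
      push_neg at h
      obtain ⟨q, hq, hdq⟩ := (Metric.infDist_lt_iff (hGrne B)).1 h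
      have := hlower B k hkB q hq
      rw [hembpeak A k hkA] at hdq
      linarith
    exact hinf.trans (Metric.infDist_le_hausdorffDist_of_mem hy (hfin A B))
  have hhaus : ∀ A B, A ≠ B → ε ≤ Metric.hausdorffDist (Gr A) (Gr B) := by
    intro A B hAB
    obtain ⟨k, hk | hk⟩ := hdiff_exists A B hAB
    · exact hhausmain A B k hk.1 hk.2
    · rw [Metric.hausdorffDist_comm]; exact hhausmain B A k hk.1 hk.2
  -- assemble
  refine ⟨Finset.image Gr Finset.univ, ?_, ?_, ?_⟩
  · intro S hS
    obtain ⟨A, -, rfl⟩ := Finset.mem_image.1 hS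
    refine ⟨f A, (hfCtop A).of_le (by exact_mod_cast le_top), hsupp A, hderiv A, ?_, rfl⟩
    intro z
    obtain ⟨h1, h2⟩ := hsum01 A z
    have h3 : 0 ≤ ε * ∑ k ∈ A, b k z := mul_nonneg hε.le h1
    have h4 : ε * ∑ k ∈ A, b k z ≤ ε * 1 := mul_le_mul_of_nonneg_left h2 hε.le
    constructor
    · simp only [hfdef]; linarith
    · simp only [hfdef]; linarith
  · intro S hS T hT hST
    obtain ⟨A, -, rfl⟩ := Finset.mem_image.1 hS
    obtain ⟨B, -, rfl⟩ := Finset.mem_image.1 hT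
    exact hhaus A B (fun h => hST (by rw [h]))
  · rw [Finset.card_image_of_injective _ hGrinj, Finset.card_univ, Fintype.card_finset,
      Fintype.card_fun, Fintype.card_fin, Fintype.card_fin]
    -- numeric estimate
    have hMd : (0:ℝ) < (2:ℝ)^(M^d) := by positivity
    have hcast : (((2:ℕ)^(M^d) : ℕ) : ℝ) = (2:ℝ)^(M^d) := by push_cast; ring
    rw [hcast]
    rw [← Real.exp_log hMd]
    apply Real.exp_le_exp.2
    rw [Real.log_pow]
    -- key inequalities
    have hMc : c₁ * ε ^ (-(1/(mm:ℝ))) ≤ (M:ℝ) := by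
      refine le_trans ?_ hMge
      rw [Real.rpow_neg hε.le]
      have h1 : 24*(d:ℝ)*δ ≤ 24*d*(K₀ * ε ^ (1/(mm:ℝ))) := by
        apply mul_le_mul_of_nonneg_left hδ_le (by positivity)
      have h2 : r / (24*d*(K₀ * ε ^ (1/(mm:ℝ)))) ≤ r / (24*d*δ) := by
        apply div_le_div_of_nonneg_left hr.le (by positivity) h1
      refine le_trans (le_of_eq ?_) h2
      rw [hc₁def]
      field_simp
    have hbd2 : c₁^d * ε ^ (-((d:ℝ)/mm)) ≤ (M:ℝ)^d := by
      have h3 : (c₁ * ε ^ (-(1/(mm:ℝ))))^d ≤ (M:ℝ)^d :=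
        pow_le_pow_left₀ (by positivity) hMc d
      refine le_trans (le_of_eq ?_) h3
      rw [mul_pow, ← Real.rpow_natCast (ε ^ (-(1/(mm:ℝ)))) d, ← Real.rpow_mul hε.le]
      congr 2
      ring
    have hccon : (2:ℝ) ^ (-(d:ℝ) - 1) * ε₀ ^ ((d:ℝ)/mm) ≤ c₁^d * Real.log 2 := by
      have h4 : ε₀ ≤ c₂ ^ ((mm:ℝ)/d) := min_le_right _ _
      have h5 : ε₀ ^ ((d:ℝ)/mm) ≤ (c₂ ^ ((mm:ℝ)/d)) ^ ((d:ℝ)/mm) :=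
        Real.rpow_le_rpow hε₀0.le h4 (by positivity)
      have h6 : (c₂ ^ ((mm:ℝ)/d)) ^ ((d:ℝ)/mm) = c₂ := by
        rw [← Real.rpow_mul hc₂0.le]
        rw [show ((mm:ℝ)/d) * ((d:ℝ)/mm) = 1 by field_simp, Real.rpow_one]
      rw [h6] at h5
      have h7 : (2:ℝ) ^ (-(d:ℝ) - 1) * (2:ℝ)^(d+1) = 1 := by
        rw [show ((2:ℝ)^(d+1) : ℝ) = (2:ℝ) ^ ((d:ℝ)+1) by
          rw [← Real.rpow_natCast 2 (d+1)]; push_cast; ring_nf]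
        rw [← Real.rpow_add two_pos]
        norm_num
      calc (2:ℝ) ^ (-(d:ℝ) - 1) * ε₀ ^ ((d:ℝ)/mm)
          ≤ (2:ℝ) ^ (-(d:ℝ) - 1) * c₂ := by
            apply mul_le_mul_of_nonneg_left h5 (by positivity)
        _ = ((2:ℝ) ^ (-(d:ℝ) - 1) * (2:ℝ)^(d+1)) * (c₁^d * Real.log 2) := by
            rw [hc₂def]; ring
        _ = c₁^d * Real.log 2 := by rw [h7, one_mul]
    calc (2:ℝ) ^ (-(d:ℝ) - 1) * ε₀ ^ ((d:ℝ)/mm) * ε ^ (-((d:ℝ)/mm))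
        ≤ (c₁^d * Real.log 2) * ε ^ (-((d:ℝ)/mm)) := by
          apply mul_le_mul_of_nonneg_right hccon (by positivity)
      _ = (c₁^d * ε ^ (-((d:ℝ)/mm))) * Real.log 2 := by ring
      _ ≤ (M:ℝ)^d * Real.log 2 := mul_le_mul_of_nonneg_right hbd2 hlog2.le
      _ = ((M^d : ℕ) : ℝ) * Real.log 2 := by push_cast; ring

/-- Fix integers `N ≥ 2`, `m ≥ 1` and `β, r > 0`, and a point
`x = (x', x_N) ∈ ℝ^N ≅ ℝ^{N-1} × ℝ` (Euclidean, i.e. `ℓ²`, product norm). Consider the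
space `X_{mβε}(B'_{N-1}(x,r))` of graphs over the closure of `B'_{N-1}(x,r)` of `C^m`
functions `f` with `f − x_N` compactly supported in `B'_{N-1}(x,r)`, `C^m` norm of the
perturbation `f − x_N` at most `β`, and `x_N ≤ f ≤ x_N + ε`, endowed with the Hausdorff
distance. Then there is `ε₀ > 0`, depending on `N`, `m`, `β`, `r` only, such that every
`0 < ε < ε₀` admits an `ε`-discrete subset `Z_ε` of this space with at least
`exp(2^{-N} ε₀^{(N-1)/m} ε^{-(N-1)/m})` elements. -/
theorem stmt6 (N m : ℕ) (hN : 2 ≤ N) (hm : 1 ≤ m) (β r : ℝ) (hβ : 0 < β) (hr : 0 < r)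
    (x' : EuclideanSpace ℝ (Fin (N - 1))) (xN : ℝ) :
    ∃ ε₀ : ℝ, 0 < ε₀ ∧ ∀ ε : ℝ, 0 < ε → ε < ε₀ →
      ∃ Z : Finset (Set (WithLp 2 (EuclideanSpace ℝ (Fin (N - 1)) × ℝ))),
        (∀ S ∈ Z, ∃ f : EuclideanSpace ℝ (Fin (N - 1)) → ℝ,
          ContDiff ℝ m f ∧
          tsupport (fun z => f z - xN) ⊆ Metric.ball x' r ∧
          (∀ i ≤ m, ∀ z, ‖iteratedFDeriv ℝ i (fun z => f z - xN) z‖ ≤ β) ∧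
          (∀ z, xN ≤ f z ∧ f z ≤ xN + ε) ∧
          S = (fun z => (WithLp.equiv 2 (EuclideanSpace ℝ (Fin (N - 1)) × ℝ)).symm (z, f z)) ''
                Metric.closedBall x' r) ∧
        (∀ S ∈ Z, ∀ T ∈ Z, S ≠ T → ε ≤ Metric.hausdorffDist S T) ∧
        Real.exp (2 ^ (-(N : ℝ)) * ε₀ ^ (((N : ℝ) - 1) / m) * ε ^ (-(((N : ℝ) - 1) / m)))
          ≤ (Z.card : ℝ) := by
  have hd : 1 ≤ N - 1 := by omega
  obtain ⟨ε₀, hε₀, h⟩ := stmt6_aux (N - 1) m hd hm β r hβ hr x' xN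
  refine ⟨ε₀, hε₀, fun ε hε hεlt => ?_⟩
  obtain ⟨Z, h1, h2, h3⟩ := h ε hε hεlt
  refine ⟨Z, h1, h2, ?_⟩
  have hc : ((N - 1 : ℕ) : ℝ) = (N:ℝ) - 1 := by
    have : 1 ≤ N := by omega
    push_cast [Nat.cast_sub this]
    ring
  have hexp1 : (-((N - 1 : ℕ):ℝ) - 1) = -(N:ℝ) := by rw [hc]; ring
  have hexp2 : (((N - 1 : ℕ):ℝ))/m = ((N:ℝ)-1)/m := by rw [hc]
  rw [hexp1, hexp2] at h3
  exact h3
end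

section
/- Fix integers N ≥ 2 and m ≥ 1 and a positive constant β. Then there exists ε₀ > 0, depending on N, m and β only, such that for every ε with 0 < ε < ε₀ there exists a family of functions f : ℝ^{N-1} → ℝ, each of class C^m, supported in the open ball B_{N-1}(0,1/2), satisfying ‖f‖_{C^m} ≤ β and 0 ≤ f ≤ ε, which is ε-discrete with respect to the supremum norm (any two distinct members differ by at least ε in sup norm) and has at least exp(2^{-N} ε₀^{(N-1)/m} ε^{-(N-1)/m}) elements. -/
open Metric Set Function
open scoped ContDiff

section shift
universe u
variable {E : Type u} [NormedAddCommGroup E] [NormedSpace ℝ E]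

theorem iteratedFDeriv_comp_sub'' (n : ℕ) :
    ∀ {F : Type u} [NormedAddCommGroup F] [NormedSpace ℝ F] (f : E → F),
      ContDiff ℝ ∞ f → ∀ (p x : E),
      iteratedFDeriv ℝ n (fun z => f (z - p)) x = iteratedFDeriv ℝ n f (x - p) := by
  induction n with
  | zero =>
    intro F _ _ f hf p x
    ext m
    simp [iteratedFDeriv_zero_apply]
  | succ n ih =>
    intro F _ _ f hf p x
    have hfd : (fun z => fderiv ℝ (fun w => f (w - p)) z) = fun z => fderiv ℝ f (z - p) := by
      funext z
      have ht : HasFDerivAt (fun w : E => w - p) (ContinuousLinearMap.id ℝ E) z :=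
        (hasFDerivAt_id z).sub_const p
      have h1 : HasFDerivAt (fun w => f (w - p)) (fderiv ℝ f (z - p)) z := by
        simpa [Function.comp_def] using ((hf.differentiable (by simp) (z - p)).hasFDerivAt.comp z ht)
      exact h1.fderiv
    ext m
    rw [iteratedFDeriv_succ_apply_right, iteratedFDeriv_succ_apply_right]
    have h2 : iteratedFDeriv ℝ n (fderiv ℝ fun w => f (w - p)) x
        = iteratedFDeriv ℝ n (fun z => fderiv ℝ f (z - p)) x := by
      congr 1
    rw [h2, ih (fderiv ℝ f) (hf.fderiv_right (by exact_mod_cast le_top)) p x]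
end shift

set_option maxHeartbeats 2000000 in
lemma key (n m : ℕ) (hn : 1 ≤ n) (hm : 1 ≤ m) (β : ℝ) (hβ : 0 < β) :
    ∃ ε₀ : ℝ, 0 < ε₀ ∧ ∀ ε : ℝ, 0 < ε → ε < ε₀ →
      ∃ Z : Finset (EuclideanSpace ℝ (Fin n) → ℝ),
        (∀ f ∈ Z, ContDiff ℝ m f ∧
          Function.support f ⊆ Metric.ball (0 : EuclideanSpace ℝ (Fin n)) (1 / 2) ∧
          (∀ i ≤ m, ∀ z, ‖iteratedFDeriv ℝ i f z‖ ≤ β) ∧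
          (∀ z, 0 ≤ f z ∧ f z ≤ ε)) ∧
        (∀ f ∈ Z, ∀ g ∈ Z, f ≠ g → ε ≤ ⨆ z, |f z - g z|) ∧
        Real.exp (2 ^ (-((n : ℝ) + 1)) * ε₀ ^ ((n : ℝ) / m) * ε ^ (-((n : ℝ) / m)))
          ≤ (Z.card : ℝ) := by
  classical
  -- the model bump
  set ψ : ContDiffBump (0 : EuclideanSpace ℝ (Fin n)) := ⟨1/2, 1, by norm_num, by norm_num⟩ with hψ
  -- bound on derivatives of the model bump
  obtain ⟨C, hC1, hC⟩ : ∃ C : ℝ, 1 ≤ C ∧ ∀ i ≤ m, ∀ x : EuclideanSpace ℝ (Fin n), ‖iteratedFDeriv ℝ i (⇑ψ) x‖ ≤ C := by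
    have h : ∀ i : ℕ, ∃ Ci : ℝ, ∀ x : EuclideanSpace ℝ (Fin n), ‖iteratedFDeriv ℝ i (⇑ψ) x‖ ≤ Ci := by
      intro i
      have hcont : Continuous (iteratedFDeriv ℝ i (⇑ψ)) :=
        (ψ.contDiff (n := ⊤)).continuous_iteratedFDeriv (by exact_mod_cast le_top)
      have hcs : HasCompactSupport (iteratedFDeriv ℝ i (⇑ψ)) :=
        ψ.hasCompactSupport.iteratedFDeriv i
      exact hcont.bounded_above_of_compact_support hcs
    choose c hc using h
    refine ⟨1 + ∑ i ∈ Finset.range (m + 1), max (c i) 0, by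
      have : (0:ℝ) ≤ ∑ i ∈ Finset.range (m + 1), max (c i) 0 :=
        Finset.sum_nonneg fun j _ => le_max_right _ _
      linarith, ?_⟩
    intro i hi x
    have h1 : ‖iteratedFDeriv ℝ i (⇑ψ) x‖ ≤ max (c i) 0 := (hc i x).trans (le_max_left _ _)
    have h2 : max (c i) 0 ≤ ∑ j ∈ Finset.range (m + 1), max (c j) 0 :=
      Finset.single_le_sum (f := fun j => max (c j) 0) (fun j _ => le_max_right _ _)
        (Finset.mem_range.2 (Nat.lt_succ_of_le hi))
    linarith
  have hC0 : (0:ℝ) < C := lt_of_lt_of_le one_pos hC1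
  set s : ℝ := Real.sqrt n with hs
  have hs1 : 1 ≤ s := by
    rw [hs, show (1:ℝ) = Real.sqrt 1 by simp]
    exact Real.sqrt_le_sqrt (by exact_mod_cast hn)
  have hs0 : 0 < s := lt_of_lt_of_le one_pos hs1
  have hm0 : (0:ℝ) < m := by exact_mod_cast hm
  set α : ℝ := (n : ℝ) / m with hα
  have hα0 : 0 < α := div_pos (by exact_mod_cast hn) hm0
  set D : ℝ := (16 * s) ^ (-(n:ℝ)) * (β / C) ^ α with hD
  have hD0 : 0 < D := by
    apply mul_pos
    · exact Real.rpow_pos_of_pos (by linarith) _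
    · exact Real.rpow_pos_of_pos (div_pos hβ hC0) _
  set ε₁ : ℝ := β / (C * (16 * s) ^ m) with hε₁
  have hε₁0 : 0 < ε₁ := div_pos hβ (mul_pos hC0 (pow_pos (by linarith) m))
  set ε₂ : ℝ := (2 ^ ((n:ℝ) + 1) * D * Real.log 2) ^ (1 / α) with hε₂
  have h2pos : (0:ℝ) < 2 ^ ((n:ℝ) + 1) * D * Real.log 2 := by
    apply mul_pos (mul_pos (Real.rpow_pos_of_pos two_pos _) hD0)
    exact Real.log_pos one_lt_two
  have hε₂0 : 0 < ε₂ := Real.rpow_pos_of_pos h2pos _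
  refine ⟨min ε₁ ε₂, lt_min hε₁0 hε₂0, ?_⟩
  intro ε hε0 hεlt
  set ε₀ : ℝ := min ε₁ ε₂ with hε₀
  -- the scale
  set r : ℝ := (C * ε / β) ^ ((1:ℝ) / m) with hr
  have hq0 : 0 < C * ε / β := div_pos (mul_pos hC0 hε0) hβ
  have hr0 : 0 < r := Real.rpow_pos_of_pos hq0 _
  have hrm : r ^ m = C * ε / β := by
    rw [hr, ← Real.rpow_natCast _ m, ← Real.rpow_mul hq0.le]
    rw [show (1/(m:ℝ)) * m = 1 by field_simp, Real.rpow_one]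
  have hεε₁ : ε ≤ ε₁ := le_of_lt (lt_of_lt_of_le hεlt (min_le_left _ _))
  have hεε₂ : ε₀ ≤ ε₂ := min_le_right _ _
  have hr16 : r ≤ (16 * s)⁻¹ := by
    have h1 : r ^ m ≤ ((16 * s)⁻¹) ^ m := by
      rw [hrm, inv_pow]
      have h2 : C * ε₁ / β = ((16 * s) ^ m)⁻¹ := by
        rw [hε₁]; field_simp
      calc C * ε / β ≤ C * ε₁ / β := by gcongr
        _ = ((16 * s) ^ m)⁻¹ := h2
    exact le_of_pow_le_pow_left₀ (by omega) (by positivity) h1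
  have hr1 : r ≤ 1 := by
    have : (16 * s)⁻¹ ≤ 1 := by
      rw [inv_le_one₀ (by linarith)]; linarith
    linarith
  have hrs : 16 * s * r ≤ 1 := by
    calc 16 * s * r ≤ 16 * s * (16 * s)⁻¹ := by gcongr
      _ = 1 := mul_inv_cancel₀ (by positivity)
  -- the grid size
  obtain ⟨K, hK⟩ : ∃ K : ℕ, K = ⌊1 / (8 * s * r)⌋₊ := ⟨_, rfl⟩
  have hx2 : (2:ℝ) ≤ 1 / (8 * s * r) := by
    rw [le_div_iff₀ (by positivity)]
    linarith
  have hKge : 1 / (16 * s * r) ≤ (K : ℝ) := by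
    have h1 : 1 / (8 * s * r) - 1 < (K : ℝ) := by
      rw [hK]; exact Nat.sub_one_lt_floor _
    have h2 : 1 / (16 * s * r) ≤ 1 / (8 * s * r) - 1 := by
      have h3 : 1 / (16 * s * r) = (1 / (8 * s * r)) / 2 := by
        field_simp; ring
      rw [h3]
      linarith
    linarith
  have hKle : (K : ℝ) ≤ 1 / (8 * s * r) := by
    rw [hK]; exact Nat.floor_le (by positivity)
  have hK1 : 1 ≤ K := by
    have := hKge
    by_contra h
    push_neg at h
    interval_cases K
    · simp at this
      have : 0 < 1 / (16 * s * r) := by positivity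
      linarith
  -- the grid points
  obtain ⟨p, hp_apply⟩ : ∃ p : (Fin n → Fin K) → EuclideanSpace ℝ (Fin n),
      ∀ v i, p v i = 3 * r * ((v i : ℕ) : ℝ) :=
    ⟨fun v => (WithLp.equiv 2 (Fin n → ℝ)).symm (fun i => 3 * r * ((v i : ℕ) : ℝ)),
      fun v i => rfl⟩
  -- norms of grid points
  have hp_norm : ∀ v, ‖p v‖ ≤ 3 / 8 := by
    intro v
    have h1 : ‖p v‖ ≤ s * (3 * r * K) := by
      rw [EuclideanSpace.norm_eq]
      have hsum : ∑ i, ‖p v i‖ ^ 2 ≤ (n : ℝ) * (3 * r * K) ^ 2 := by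
        have : ∀ i : Fin n, ‖p v i‖ ^ 2 ≤ (3 * r * K) ^ 2 := by
          intro i
          have h2 : ‖p v i‖ ≤ 3 * r * K := by
            rw [hp_apply, Real.norm_eq_abs, abs_of_nonneg (by positivity)]
            have : ((v i : ℕ) : ℝ) ≤ (K : ℝ) := by
              exact_mod_cast le_of_lt (v i).2
            nlinarith [hr0.le]
          exact pow_le_pow_left₀ (norm_nonneg _) h2 2
        calc ∑ i, ‖p v i‖ ^ 2 ≤ ∑ _i : Fin n, (3 * r * K) ^ 2 :=
              Finset.sum_le_sum fun i _ => this i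
          _ = (n : ℝ) * (3 * r * K) ^ 2 := by simp [mul_comm]
      calc Real.sqrt (∑ i, ‖p v i‖ ^ 2) ≤ Real.sqrt ((n : ℝ) * (3 * r * K) ^ 2) :=
            Real.sqrt_le_sqrt hsum
        _ = s * (3 * r * K) := by
            rw [Real.sqrt_mul (by positivity), Real.sqrt_sq (by positivity), hs]
    have h2 : s * (3 * r * K) ≤ 3 / 8 := by
      have := hKle
      have h3 : s * (3 * r * K) ≤ s * (3 * r * (1 / (8 * s * r))) := by
        gcongr
      have h4 : s * (3 * r * (1 / (8 * s * r))) = 3 / 8 := by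
        field_simp
      linarith
    linarith
  -- separation of grid points
  have hp_dist : ∀ v w, v ≠ w → 3 * r ≤ dist (p v) (p w) := by
    intro v w hvw
    obtain ⟨i, hi⟩ : ∃ i, v i ≠ w i := by
      by_contra h; push_neg at h; exact hvw (funext h)
    have h1 : 3 * r ≤ dist (p v i) (p w i) := by
      rw [Real.dist_eq, hp_apply, hp_apply, ← mul_sub, abs_mul,
        abs_of_nonneg (by positivity : (0:ℝ) ≤ 3 * r)]
      have h2 : (1:ℝ) ≤ |((v i : ℕ) : ℝ) - ((w i : ℕ) : ℝ)| := by
        have : (v i : ℕ) ≠ (w i : ℕ) := fun h => hi (Fin.ext h)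
        rcases lt_or_gt_of_ne this with h | h
        · rw [abs_sub_comm]
          rw [le_abs]
          left
          have : (v i : ℕ) + 1 ≤ (w i : ℕ) := h
          have := (Nat.cast_le (α := ℝ)).2 this
          push_cast at this ⊢
          linarith
        · rw [le_abs]
          left
          have : (w i : ℕ) + 1 ≤ (v i : ℕ) := h
          have := (Nat.cast_le (α := ℝ)).2 this
          push_cast at this ⊢
          linarith
      nlinarith [hr0.le]
    have h2 : dist (p v i) (p w i) ≤ dist (p v) (p w) := by
      rw [EuclideanSpace.dist_eq]
      have h3 : dist (p v i) (p w i) ^ 2 ≤ ∑ j, dist (p v j) (p w j) ^ 2 :=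
        Finset.single_le_sum (f := fun j => dist (p v j) (p w j) ^ 2)
          (fun j _ => sq_nonneg _) (Finset.mem_univ i)
      calc dist (p v i) (p w i) = Real.sqrt (dist (p v i) (p w i) ^ 2) :=
            (Real.sqrt_sq dist_nonneg).symm
        _ ≤ _ := Real.sqrt_le_sqrt h3
    linarith
  -- the rescaled translated bumps
  obtain ⟨g, hg⟩ : ∃ g : (Fin n → Fin K) → EuclideanSpace ℝ (Fin n) → ℝ,
      ∀ v z, g v z = ψ (r⁻¹ • (z - p v)) :=
    ⟨fun v z => ψ (r⁻¹ • (z - p v)), fun v z => rfl⟩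
  have hψ_supp : support ⇑ψ = ball (0 : EuclideanSpace ℝ (Fin n)) 1 := by
    simpa using ψ.support_eq
  have hg_smooth : ∀ v, ContDiff ℝ ∞ (g v) := by
    intro v
    have : g v = fun z => ψ (r⁻¹ • (z - p v)) := funext fun z => hg v z
    rw [this]
    exact (ψ.contDiff (n := (⊤:ℕ∞))).comp ((contDiff_id.sub contDiff_const).const_smul r⁻¹)
  have hg_nonneg : ∀ v z, 0 ≤ g v z := fun v z => by rw [hg]; exact ψ.nonneg
  have hg_le_one : ∀ v z, g v z ≤ 1 := fun v z => by rw [hg]; exact ψ.le_one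
  have hg_center : ∀ v, g v (p v) = 1 := by
    intro v
    rw [hg, sub_self, smul_zero]
    exact ψ.one_of_mem_closedBall (by simp [hψ])
  have hg_supp : ∀ v, support (g v) ⊆ ball (p v) r := by
    intro v z hz
    rw [mem_support, hg] at hz
    have h1 : r⁻¹ • (z - p v) ∈ support ⇑ψ := hz
    rw [hψ_supp, mem_ball_zero_iff] at h1
    rw [norm_smul, norm_inv, Real.norm_eq_abs, abs_of_pos hr0] at h1
    rw [mem_ball_iff_norm]
    calc ‖z - p v‖ = r * (r⁻¹ * ‖z - p v‖) := by field_simp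
      _ < r * 1 := by
          apply mul_lt_mul_of_pos_left _ hr0
          exact h1
      _ = r := mul_one r
  have hg_tsupp : ∀ v, tsupport (g v) ⊆ closedBall (p v) r := fun v =>
    closure_minimal ((hg_supp v).trans ball_subset_closedBall) isClosed_closedBall
  -- derivative bounds for the bumps
  have hg_deriv : ∀ v, ∀ i ≤ m, ∀ z, ‖iteratedFDeriv ℝ i (g v) z‖ ≤ C * r⁻¹ ^ i := by
    intro v i hi z
    set L : EuclideanSpace ℝ (Fin n) →L[ℝ] EuclideanSpace ℝ (Fin n) :=
      r⁻¹ • ContinuousLinearMap.id ℝ (EuclideanSpace ℝ (Fin n)) with hL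
    have hLnorm : ‖L‖ ≤ r⁻¹ := by
      rw [hL]
      calc ‖r⁻¹ • ContinuousLinearMap.id ℝ (EuclideanSpace ℝ (Fin n))‖
          ≤ ‖r⁻¹‖ * ‖ContinuousLinearMap.id ℝ (EuclideanSpace ℝ (Fin n))‖ := ContinuousLinearMap.opNorm_smul_le _ _
        _ ≤ ‖r⁻¹‖ * 1 := by
            apply mul_le_mul_of_nonneg_left ContinuousLinearMap.norm_id_le (norm_nonneg _)
        _ = r⁻¹ := by rw [mul_one, Real.norm_eq_abs, abs_of_pos (inv_pos.2 hr0)]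
    have hgeq : g v = fun z => (⇑ψ ∘ ⇑L) (z - p v) := by
      funext z
      rw [hg]
      simp [hL]
    have h1 : iteratedFDeriv ℝ i (g v) z = iteratedFDeriv ℝ i (⇑ψ ∘ ⇑L) (z - p v) := by
      rw [hgeq]
      exact iteratedFDeriv_comp_sub'' i (⇑ψ ∘ ⇑L)
        ((ψ.contDiff (n := (⊤:ℕ∞))).comp L.contDiff) (p v) z
    have h2 : iteratedFDeriv ℝ i (⇑ψ ∘ ⇑L) (z - p v)
        = (iteratedFDeriv ℝ i (⇑ψ) (L (z - p v))).compContinuousLinearMap fun _ => L :=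
      L.iteratedFDeriv_comp_right (ψ.contDiff (n := (⊤:ℕ∞))) _ (by exact_mod_cast le_top)
    rw [h1, h2]
    calc ‖(iteratedFDeriv ℝ i (⇑ψ) (L (z - p v))).compContinuousLinearMap fun _ => L‖
        ≤ ‖iteratedFDeriv ℝ i (⇑ψ) (L (z - p v))‖ * ∏ _j : Fin i, ‖L‖ :=
          ContinuousMultilinearMap.norm_compContinuousLinearMap_le _ _
      _ ≤ C * r⁻¹ ^ i := by
          apply mul_le_mul (hC i hi _)
          · rw [Finset.prod_const]
            simp only [Finset.card_univ, Fintype.card_fin]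
            exact pow_le_pow_left₀ (norm_nonneg _) hLnorm i
          · exact Finset.prod_nonneg fun j _ => norm_nonneg _
          · linarith
  -- disjointness of the supports
  have hdisj : ∀ (z : EuclideanSpace ℝ (Fin n)) v w, v ≠ w →
      z ∈ closedBall (p v) r → z ∉ closedBall (p w) r := by
    intro z v w hvw hzv hzw
    have h1 := hp_dist v w hvw
    have h2 : dist (p v) (p w) ≤ dist (p v) z + dist z (p w) := dist_triangle _ _ _
    rw [mem_closedBall] at hzv hzw
    rw [dist_comm (p v) z] at h2
    linarith
  have hg_zero : ∀ (z : EuclideanSpace ℝ (Fin n)) v, z ∉ closedBall (p v) r → g v z = 0 := by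
    intro z v hz
    by_contra h
    exact hz (ball_subset_closedBall (hg_supp v (mem_support.2 h)))
  -- center values
  have hcenter_other : ∀ v w, v ≠ w → g w (p v) = 0 := by
    intro v w hvw
    apply hg_zero
    intro hmem
    rw [mem_closedBall] at hmem
    rw [dist_comm] at hmem
    have h5 := hp_dist w v (fun h => hvw h.symm)
    linarith
  -- sums of bumps
  have hsum_nonneg : ∀ (S : Finset (Fin n → Fin K)) z, 0 ≤ ∑ v ∈ S, g v z :=
    fun S z => Finset.sum_nonneg fun v _ => hg_nonneg v z
  have hsum_le_one : ∀ (S : Finset (Fin n → Fin K)) z, ∑ v ∈ S, g v z ≤ 1 := by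
    intro S z
    by_cases h : ∃ v ∈ S, g v z ≠ 0
    · obtain ⟨v₀, hv₀, hgv₀⟩ := h
      have hzv₀ : z ∈ closedBall (p v₀) r :=
        ball_subset_closedBall (hg_supp v₀ (mem_support.2 hgv₀))
      have heq : ∑ v ∈ S, g v z = g v₀ z :=
        Finset.sum_eq_single_of_mem v₀ hv₀ fun w hw hne =>
          hg_zero z w (hdisj z v₀ w (fun h => hne h.symm) hzv₀)
      rw [heq]; exact hg_le_one v₀ z
    · push_neg at h
      have heq : ∑ v ∈ S, g v z = 0 := Finset.sum_eq_zero h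
      rw [heq]; norm_num
  have hsum_center : ∀ (S : Finset (Fin n → Fin K)) v,
      (∑ w ∈ S, g w (p v)) = if v ∈ S then 1 else 0 := by
    intro S v
    by_cases hv : v ∈ S
    · rw [if_pos hv]
      have heq : ∑ w ∈ S, g w (p v) = g v (p v) :=
        Finset.sum_eq_single_of_mem v hv fun w hw hne => hcenter_other v w (fun h => hne h.symm)
      rw [heq, hg_center]
    · rw [if_neg hv]
      exact Finset.sum_eq_zero fun w hw => hcenter_other v w (fun h => hv (h ▸ hw))
  -- the family
  obtain ⟨Ff, hFf⟩ : ∃ Ff : Finset (Fin n → Fin K) → (EuclideanSpace ℝ (Fin n) → ℝ),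
      ∀ S z, Ff S z = ε * ∑ v ∈ S, g v z :=
    ⟨fun S z => ε * ∑ v ∈ S, g v z, fun S z => rfl⟩
  have hFval : ∀ (S : Finset (Fin n → Fin K)) v, Ff S (p v) = if v ∈ S then ε else 0 := by
    intro S v
    rw [hFf, hsum_center]
    by_cases hv : v ∈ S <;> simp [hv]
  have hFinj : Function.Injective Ff := by
    intro S T h
    by_contra hne
    have : ¬∀ v, v ∈ S ↔ v ∈ T := fun h' => hne (Finset.ext h')
    push_neg at this
    obtain ⟨v, hv⟩ := this
    have h1 := hFval S v
    have h2 := hFval T v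
    rw [h] at h1
    rw [h1] at h2
    by_cases hvS : v ∈ S <;> by_cases hvT : v ∈ T
    · exact hv.elim (fun h => h.2 hvT) (fun h => h.1 hvS)
    · rw [if_pos hvS, if_neg hvT] at h2; exact hε0.ne' h2
    · rw [if_neg hvS, if_pos hvT] at h2; exact hε0.ne h2
    · exact hv.elim (fun h => hvS h.1) (fun h => hvT h.2)
  set Z : Finset (EuclideanSpace ℝ (Fin n) → ℝ) := Finset.image Ff Finset.univ with hZ
  have hZcard : Z.card = 2 ^ (K ^ n) := by
    rw [hZ, Finset.card_image_of_injective _ hFinj, Finset.card_univ, Fintype.card_finset,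
      Fintype.card_pi]
    simp [Finset.prod_const]
  have hFvals : ∀ (S : Finset (Fin n → Fin K)) z, 0 ≤ Ff S z ∧ Ff S z ≤ ε := by
    intro S z
    rw [hFf]
    constructor
    · exact mul_nonneg hε0.le (hsum_nonneg S z)
    · calc ε * ∑ v ∈ S, g v z ≤ ε * 1 := mul_le_mul_of_nonneg_left (hsum_le_one S z) hε0.le
        _ = ε := mul_one ε
  have hr116 : r ≤ 1/16 := by
    have h16s : (16:ℝ) ≤ 16 * s := by nlinarith
    have h8 : (16 * s)⁻¹ ≤ (16:ℝ)⁻¹ := by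
      apply inv_anti₀ (by norm_num) h16s
    rw [show (1:ℝ)/16 = (16:ℝ)⁻¹ by norm_num]
    linarith
  refine ⟨Z, ?_, ?_, ?_⟩
  · -- properties of each member
    intro f hf
    rw [hZ, Finset.mem_image] at hf
    obtain ⟨S, -, rfl⟩ := hf
    have hFs : Ff S = fun z => ε * ∑ v ∈ S, g v z := funext (hFf S)
    refine ⟨?_, ?_, ?_, fun z => hFvals S z⟩
    · rw [hFs]
      exact contDiff_const.mul (ContDiff.sum fun v _ => (hg_smooth v).of_le (mod_cast le_top))
    · intro z hz
      rw [mem_support, hFf] at hz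
      have hsne : ∑ v ∈ S, g v z ≠ 0 := fun h => hz (by rw [h, mul_zero])
      obtain ⟨v, hv, hgv⟩ := Finset.exists_ne_zero_of_sum_ne_zero hsne
      have hzb : z ∈ ball (p v) r := hg_supp v (mem_support.2 hgv)
      rw [mem_ball_iff_norm] at hzb
      rw [mem_ball_zero_iff]
      calc ‖z‖ = ‖(z - p v) + p v‖ := by rw [sub_add_cancel]
        _ ≤ ‖z - p v‖ + ‖p v‖ := norm_add_le _ _
        _ < r + 3/8 := by have := hp_norm v; linarith
        _ ≤ 1/2 := by linarith
    · intro i hi z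
      have hFs2 : Ff S = ε • (fun z => ∑ v ∈ S, g v z) := funext fun z => by rw [hFf]; rfl
      have hsmooth_sum : ContDiff ℝ (i : WithTop ℕ∞) fun z => ∑ v ∈ S, g v z :=
        ContDiff.sum fun v _ => (hg_smooth v).of_le (mod_cast le_top)
      rw [hFs2, iteratedFDeriv_const_smul_apply hsmooth_sum.contDiffAt, norm_smul, Real.norm_eq_abs,
        abs_of_pos hε0]
      have hsum_eq : iteratedFDeriv ℝ i (fun z => ∑ v ∈ S, g v z) z
          = ∑ v ∈ S, iteratedFDeriv ℝ i (g v) z := by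
        have h9 := iteratedFDeriv_sum (u := S) (f := fun v => g v) (i := i)
          (fun v _ => (hg_smooth v).of_le (mod_cast le_top))
        calc iteratedFDeriv ℝ i (fun z => ∑ v ∈ S, g v z) z
            = (∑ v ∈ S, iteratedFDeriv ℝ i (g v)) z := congrFun h9 z
          _ = ∑ v ∈ S, iteratedFDeriv ℝ i (g v) z := Finset.sum_apply _ _ _
      rw [hsum_eq]
      have hbound : ‖∑ v ∈ S, iteratedFDeriv ℝ i (g v) z‖ ≤ C * r⁻¹ ^ i := by
        by_cases hex : ∃ v ∈ S, z ∈ closedBall (p v) r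
        · obtain ⟨v₀, hv₀, hzv₀⟩ := hex
          have heq : ∑ v ∈ S, iteratedFDeriv ℝ i (g v) z = iteratedFDeriv ℝ i (g v₀) z :=
            Finset.sum_eq_single_of_mem v₀ hv₀ (fun w hw hne => by
              have hznot : z ∉ closedBall (p w) r := hdisj z v₀ w (fun h => hne h.symm) hzv₀
              by_contra hcon
              exact hznot (hg_tsupp w (support_iteratedFDeriv_subset i (mem_support.2 hcon))))
          rw [heq]; exact hg_deriv v₀ i hi z
        · push_neg at hex
          have heq : ∑ v ∈ S, iteratedFDeriv ℝ i (g v) z = 0 :=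
            Finset.sum_eq_zero (fun w hw => by
              by_contra hcon
              exact hex w hw (hg_tsupp w (support_iteratedFDeriv_subset i (mem_support.2 hcon))))
          rw [heq, norm_zero]
          positivity
      have hrinv1 : (1:ℝ) ≤ r⁻¹ := by
        have h10 := inv_anti₀ hr0 hr1
        simpa using h10
      calc ε * ‖∑ v ∈ S, iteratedFDeriv ℝ i (g v) z‖
          ≤ ε * (C * r⁻¹ ^ i) := mul_le_mul_of_nonneg_left hbound hε0.le
        _ ≤ ε * (C * r⁻¹ ^ m) := by
            have h2 : r⁻¹ ^ i ≤ r⁻¹ ^ m := pow_le_pow_right₀ hrinv1 hi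
            have h3 : C * r⁻¹ ^ i ≤ C * r⁻¹ ^ m := mul_le_mul_of_nonneg_left h2 hC0.le
            exact mul_le_mul_of_nonneg_left h3 hε0.le
        _ = β := by
            have h3 : r⁻¹ ^ m = β / (C * ε) := by rw [inv_pow, hrm, inv_div]
            rw [h3]
            field_simp
  · -- separation
    intro f hf f' hf' hne
    rw [hZ, Finset.mem_image] at hf hf'
    obtain ⟨S, -, rfl⟩ := hf
    obtain ⟨T, -, rfl⟩ := hf'
    have hST : S ≠ T := fun h => hne (h ▸ rfl)
    have hbdd : BddAbove (range fun z => |Ff S z - Ff T z|) := by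
      refine ⟨ε, ?_⟩
      rintro x ⟨z, rfl⟩
      obtain ⟨h1, h2⟩ := hFvals S z
      obtain ⟨h3, h4⟩ := hFvals T z
      rw [abs_sub_le_iff]
      constructor <;> linarith
    have : ¬∀ v, v ∈ S ↔ v ∈ T := fun h' => hST (Finset.ext h')
    push_neg at this
    obtain ⟨v, hv⟩ := this
    have hval : |Ff S (p v) - Ff T (p v)| = ε := by
      rw [hFval, hFval]
      by_cases hvS : v ∈ S <;> by_cases hvT : v ∈ T
      · exact absurd (iff_of_true hvS hvT) (by tauto)
      · rw [if_pos hvS, if_neg hvT, sub_zero, abs_of_pos hε0]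
      · rw [if_neg hvS, if_pos hvT, zero_sub, abs_neg, abs_of_pos hε0]
      · exact absurd (iff_of_false hvS hvT) (by tauto)
    calc ε = |Ff S (p v) - Ff T (p v)| := hval.symm
      _ ≤ ⨆ z, |Ff S z - Ff T z| := le_ciSup hbdd (p v)
  · -- cardinality
    rw [hZcard]
    have hcast : ((2 ^ (K ^ n) : ℕ) : ℝ) = (2:ℝ) ^ (K ^ n) := by push_cast; ring
    rw [hcast]
    have h2exp : (2:ℝ) ^ (K ^ n) = Real.exp ((K ^ n : ℕ) * Real.log 2) := by
      rw [Real.exp_nat_mul, Real.exp_log two_pos]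
    rw [h2exp, Real.exp_le_exp]
    -- ε₀ ^ α ≤ 2^(n+1) * D * log 2
    have hε₀pos : 0 < ε₀ := lt_min hε₁0 hε₂0
    have hA : ε₀ ^ α ≤ 2 ^ ((n:ℝ) + 1) * D * Real.log 2 := by
      have h1 : ε₀ ^ α ≤ ε₂ ^ α := Real.rpow_le_rpow hε₀pos.le hεε₂ hα0.le
      have h2 : ε₂ ^ α = 2 ^ ((n:ℝ) + 1) * D * Real.log 2 := by
        rw [hε₂, ← Real.rpow_mul h2pos.le, one_div, inv_mul_cancel₀ hα0.ne', Real.rpow_one]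
      linarith
    -- D * ε ^ (-α) ≤ (K^n : ℝ)
    have hB : D * ε ^ (-α) ≤ ((K:ℝ)) ^ n := by
      have h5 : (β/C) ^ α * ε ^ (-α) = (β/(C*ε)) ^ α := by
        rw [Real.rpow_neg hε0.le, ← Real.inv_rpow hε0.le,
          ← Real.mul_rpow (by positivity) (by positivity)]
        congr 1
        field_simp
      have h6 : (β/(C*ε)) ^ α = r⁻¹ ^ n := by
        have h61 : β/(C*ε) = r⁻¹ ^ m := by
          rw [inv_pow, hrm, inv_div]
        rw [h61, ← Real.rpow_natCast r⁻¹ m, ← Real.rpow_mul (by positivity),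
          show (m:ℝ) * α = (n:ℝ) by rw [hα]; field_simp, Real.rpow_natCast]
      have h7 : (16*s) ^ (-(n:ℝ)) = ((16*s)⁻¹) ^ n := by
        rw [Real.rpow_neg (by positivity), ← Real.inv_rpow (by positivity), Real.rpow_natCast]
      have h8 : (16*s)⁻¹ * r⁻¹ ≤ (K:ℝ) := by
        have : (16*s)⁻¹ * r⁻¹ = 1 / (16 * s * r) := by
          rw [← mul_inv]
          exact (one_div _).symm
        rw [this]; exact hKge
      calc D * ε ^ (-α) = ((16*s)⁻¹) ^ n * ((β/C) ^ α * ε ^ (-α)) := by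
            rw [hD, h7]; ring
        _ = ((16*s)⁻¹) ^ n * r⁻¹ ^ n := by rw [h5, h6]
        _ = ((16*s)⁻¹ * r⁻¹) ^ n := (mul_pow _ _ _).symm
        _ ≤ (K:ℝ) ^ n := pow_le_pow_left₀ (by positivity) h8 n
    have hlog2 : 0 < Real.log 2 := Real.log_pos one_lt_two
    have hεα : 0 < ε ^ (-α) := Real.rpow_pos_of_pos hε0 _
    have hKcast : ((K ^ n : ℕ) : ℝ) = ((K:ℝ)) ^ n := by push_cast; ring
    calc 2 ^ (-((n:ℝ) + 1)) * ε₀ ^ α * ε ^ (-α)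
        ≤ 2 ^ (-((n:ℝ) + 1)) * (2 ^ ((n:ℝ) + 1) * D * Real.log 2) * ε ^ (-α) := by
          apply mul_le_mul_of_nonneg_right _ hεα.le
          exact mul_le_mul_of_nonneg_left hA (Real.rpow_pos_of_pos two_pos _).le
      _ = (D * ε ^ (-α)) * Real.log 2 := by
          rw [show (2:ℝ) ^ (-((n:ℝ) + 1)) * (2 ^ ((n:ℝ) + 1) * D * Real.log 2)
              = (2 ^ (-((n:ℝ) + 1)) * 2 ^ ((n:ℝ) + 1)) * (D * Real.log 2) by ring,
            ← Real.rpow_add two_pos, neg_add_cancel, Real.rpow_zero, one_mul]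
          ring
      _ ≤ ((K:ℝ)) ^ n * Real.log 2 := mul_le_mul_of_nonneg_right hB hlog2.le
      _ = ((K ^ n : ℕ) : ℝ) * Real.log 2 := by rw [hKcast]

/-- Fix integers `N ≥ 2`, `m ≥ 1` and `β > 0`. Then there is `ε₀ > 0`,
depending on `N`, `m`, `β` only, such that for every `0 < ε < ε₀` there is a family of
`C^m` functions `f : ℝ^{N-1} → ℝ` supported in the open ball `B_{N-1}(0,1/2)`, with
`‖f‖_{C^m} ≤ β` and `0 ≤ f ≤ ε`, which is `ε`-discrete in the sup norm and has at least
`exp(2^{-N} ε₀^{(N-1)/m} ε^{-(N-1)/m})` elements. -/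
theorem stmt8 (N m : ℕ) (hN : 2 ≤ N) (hm : 1 ≤ m) (β : ℝ) (hβ : 0 < β) :
    ∃ ε₀ : ℝ, 0 < ε₀ ∧ ∀ ε : ℝ, 0 < ε → ε < ε₀ →
      ∃ Z : Finset (EuclideanSpace ℝ (Fin (N - 1)) → ℝ),
        (∀ f ∈ Z, ContDiff ℝ m f ∧
          Function.support f ⊆ Metric.ball (0 : EuclideanSpace ℝ (Fin (N - 1))) (1 / 2) ∧
          (∀ i ≤ m, ∀ z, ‖iteratedFDeriv ℝ i f z‖ ≤ β) ∧
          (∀ z, 0 ≤ f z ∧ f z ≤ ε)) ∧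
        (∀ f ∈ Z, ∀ g ∈ Z, f ≠ g → ε ≤ ⨆ z, |f z - g z|) ∧
        Real.exp (2 ^ (-(N : ℝ)) * ε₀ ^ (((N : ℝ) - 1) / m) * ε ^ (-(((N : ℝ) - 1) / m)))
          ≤ (Z.card : ℝ) := by
  obtain ⟨ε₀, hε₀, H⟩ := key (N - 1) m (by omega) hm β hβ
  refine ⟨ε₀, hε₀, ?_⟩
  intro ε hε0 hεlt
  obtain ⟨Z, h1, h2, h3⟩ := H ε hε0 hεlt
  refine ⟨Z, h1, h2, ?_⟩
  have hcast : ((N - 1 : ℕ) : ℝ) = (N : ℝ) - 1 := by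
    have h : (1:ℕ) ≤ N := by omega
    push_cast [h]
    ring
  have h5 : -(((N : ℝ) - 1) + 1) = -(N : ℝ) := by ring
  rw [hcast, h5] at h3
  exact h3
end

section
/- Let N ≥ 2 be an integer, K ⊆ ℝ^{N-1} a nonempty compact set, and β > 0. Let f, g : K → ℝ be functions satisfying |f(x) − f(y)| ≤ β‖x − y‖ and |g(x) − g(y)| ≤ β‖x − y‖ for all x, y ∈ K. Let Γ_f = {(x, f(x)) : x ∈ K} and Γ_g = {(x, g(x)) : x ∈ K} be their graphs, regarded as compact subsets of ℝ^N. Then the Hausdorff distance d_H(Γ_f, Γ_g) satisfies (sup_{x∈K} |f(x) − g(x)|)/√(1+β²) ≤ d_H(Γ_f, Γ_g) ≤ sup_{x∈K} |f(x) − g(x)|. -/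
/-- Comparison between the sup distance of two Lipschitz functions on a
nonempty compact set `K ⊆ ℝ^{N-1}` and the Hausdorff distance of their graphs in
`ℝ^N ≅ ℝ^{N-1} × ℝ` (with the Euclidean, i.e. `ℓ²`, product norm):
`(sup_K |f−g|)/√(1+β²) ≤ d_H(Γ_f, Γ_g) ≤ sup_K |f−g|`. -/
theorem stmt9 (N : ℕ) (hN : 2 ≤ N) (β : ℝ) (hβ : 0 < β)
    (K : Set (EuclideanSpace ℝ (Fin (N - 1)))) (hK : IsCompact K) (hKne : K.Nonempty)
    (f g : EuclideanSpace ℝ (Fin (N - 1)) → ℝ)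
    (hf : ∀ x ∈ K, ∀ y ∈ K, |f x - f y| ≤ β * ‖x - y‖)
    (hg : ∀ x ∈ K, ∀ y ∈ K, |g x - g y| ≤ β * ‖x - y‖) :
    (⨆ z : K, |f z - g z|) / Real.sqrt (1 + β ^ 2) ≤
      Metric.hausdorffDist
        ((fun z => (WithLp.equiv 2 (EuclideanSpace ℝ (Fin (N - 1)) × ℝ)).symm (z, f z)) '' K)
        ((fun z => (WithLp.equiv 2 (EuclideanSpace ℝ (Fin (N - 1)) × ℝ)).symm (z, g z)) '' K) ∧
    Metric.hausdorffDist
        ((fun z => (WithLp.equiv 2 (EuclideanSpace ℝ (Fin (N - 1)) × ℝ)).symm (z, f z)) '' K)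
        ((fun z => (WithLp.equiv 2 (EuclideanSpace ℝ (Fin (N - 1)) × ℝ)).symm (z, g z)) '' K) ≤
      ⨆ z : K, |f z - g z| := by
  classical
  set Γf := (fun z => (WithLp.equiv 2 (EuclideanSpace ℝ (Fin (N - 1)) × ℝ)).symm (z, f z)) '' K
    with hΓf
  set Γg := (fun z => (WithLp.equiv 2 (EuclideanSpace ℝ (Fin (N - 1)) × ℝ)).symm (z, g z)) '' K
    with hΓg
  have hsq : (0:ℝ) < Real.sqrt (1 + β ^ 2) := Real.sqrt_pos.mpr (by positivity)
  have hdist : ∀ (x y : EuclideanSpace ℝ (Fin (N - 1))) (s t : ℝ),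
      dist ((WithLp.equiv 2 (EuclideanSpace ℝ (Fin (N - 1)) × ℝ)).symm (x, s))
        ((WithLp.equiv 2 (EuclideanSpace ℝ (Fin (N - 1)) × ℝ)).symm (y, t))
        = Real.sqrt (dist x y ^ 2 + dist s t ^ 2) := fun x y s t =>
    WithLp.prod_dist_eq_of_L2 _ _
  have hfl : LipschitzOnWith β.toNNReal f K := by
    apply lipschitzOnWith_iff_dist_le_mul.mpr
    intro x hx y hy
    rw [Real.dist_eq, dist_eq_norm]
    calc |f x - f y| ≤ β * ‖x - y‖ := hf x hx y hy
      _ ≤ β.toNNReal * ‖x - y‖ := by gcongr; exact Real.le_coe_toNNReal β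
  have hgl : LipschitzOnWith β.toNNReal g K := by
    apply lipschitzOnWith_iff_dist_le_mul.mpr
    intro x hx y hy
    rw [Real.dist_eq, dist_eq_norm]
    calc |g x - g y| ≤ β * ‖x - y‖ := hg x hx y hy
      _ ≤ β.toNNReal * ‖x - y‖ := by gcongr; exact Real.le_coe_toNNReal β
  have hec : Continuous (WithLp.equiv 2 (EuclideanSpace ℝ (Fin (N - 1)) × ℝ)).symm :=
    (WithLp.prodContinuousLinearEquiv 2 ℝ (EuclideanSpace ℝ (Fin (N - 1))) ℝ).symm.continuous
  have hΓfc : IsCompact Γf := hK.image_of_continuousOn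
    (hec.comp_continuousOn (continuousOn_id.prodMk hfl.continuousOn))
  have hΓgc : IsCompact Γg := hK.image_of_continuousOn
    (hec.comp_continuousOn (continuousOn_id.prodMk hgl.continuousOn))
  have hΓfne : Γf.Nonempty := hKne.image _
  have hΓgne : Γg.Nonempty := hKne.image _
  have hfin : EMetric.hausdorffEdist Γf Γg ≠ ⊤ :=
    Metric.hausdorffEdist_ne_top_of_nonempty_of_bounded hΓfne hΓgne
      hΓfc.isBounded hΓgc.isBounded
  set H := Metric.hausdorffDist Γf Γg with hH
  have hH0 : 0 ≤ H := Metric.hausdorffDist_nonneg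
  have key : ∀ x ∈ K, |f x - g x| ≤ Real.sqrt (1 + β ^ 2) * H := by
    intro x hx
    have h1 : |f x - g x| / Real.sqrt (1 + β ^ 2) ≤
        Metric.infDist ((WithLp.equiv 2 (EuclideanSpace ℝ (Fin (N - 1)) × ℝ)).symm (x, f x)) Γg := by
      have : Nonempty ↥Γg := hΓgne.to_subtype
      rw [Metric.infDist_eq_iInf]
      apply le_ciInf
      rintro ⟨y', hy'⟩
      obtain ⟨y, hy, rfl⟩ := hy'
      simp only []
      rw [hdist, div_le_iff₀ hsq]
      have hr0 : (0:ℝ) ≤ dist x y := dist_nonneg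
      have hs0 : (0:ℝ) ≤ dist (f x) (g y) := dist_nonneg
      have hs1 : |f x - g x| - β * dist x y ≤ dist (f x) (g y) := by
        have h3 : |g y - g x| ≤ β * dist x y := by
          rw [abs_sub_comm, dist_eq_norm]; exact hg x hx y hy
        have h2 : |f x - g x| ≤ |f x - g y| + |g y - g x| := by
          calc |f x - g x| = |(f x - g y) + (g y - g x)| := by ring_nf
            _ ≤ |f x - g y| + |g y - g x| := abs_add_le _ _
        rw [Real.dist_eq]
        linarith
      set r := dist x y
      set s := dist (f x) (g y)
      set d := |f x - g x|
      have hd0 : (0:ℝ) ≤ d := abs_nonneg _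
      rw [← Real.sqrt_mul (by positivity : (0:ℝ) ≤ r ^ 2 + s ^ 2)]
      apply (Real.le_sqrt hd0 (by positivity)).mpr
      rcases le_or_gt d (β * r) with hc | hc
      · have : d ^ 2 ≤ (β * r) ^ 2 := by nlinarith
        nlinarith [sq_nonneg s, sq_nonneg r, mul_nonneg (sq_nonneg r) (sq_nonneg β)]
      · have hs2 : (d - β * r) ^ 2 ≤ s ^ 2 := by nlinarith
        nlinarith [sq_nonneg ((1 + β ^ 2) * r - β * d), hs2]
    have h2 : Metric.infDist ((WithLp.equiv 2 (EuclideanSpace ℝ (Fin (N - 1)) × ℝ)).symm (x, f x))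
        Γg ≤ H :=
      Metric.infDist_le_hausdorffDist_of_mem ⟨x, hx, rfl⟩ hfin
    calc |f x - g x| = |f x - g x| / Real.sqrt (1 + β ^ 2) * Real.sqrt (1 + β ^ 2) := by
          field_simp
      _ ≤ H * Real.sqrt (1 + β ^ 2) := by gcongr; linarith
      _ = Real.sqrt (1 + β ^ 2) * H := mul_comm _ _
  have hne : Nonempty K := hKne.to_subtype
  have hbdd : BddAbove (Set.range fun z : K => |f z - g z|) :=
    ⟨Real.sqrt (1 + β ^ 2) * H, by rintro _ ⟨z, rfl⟩; exact key z z.2⟩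
  have hsup_le : (⨆ z : K, |f z - g z|) ≤ Real.sqrt (1 + β ^ 2) * H :=
    ciSup_le fun z => key z z.2
  have hsup0 : 0 ≤ ⨆ z : K, |f z - g z| := by
    obtain ⟨z0, hz0⟩ := hKne
    exact le_trans (abs_nonneg _) (le_ciSup hbdd ⟨z0, hz0⟩)
  constructor
  · rw [div_le_iff₀ hsq]
    linarith [hsup_le]
  · apply Metric.hausdorffDist_le_of_mem_dist hsup0
    · rintro _ ⟨z, hz, rfl⟩
      refine ⟨_, ⟨z, hz, rfl⟩, ?_⟩
      rw [hdist]
      simp only [dist_self]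
      rw [Real.dist_eq]
      calc Real.sqrt (0 ^ 2 + |f z - g z| ^ 2) = |f z - g z| := by
            simp [Real.sqrt_sq_eq_abs, abs_abs]
        _ ≤ ⨆ z : K, |f z - g z| := le_ciSup hbdd ⟨z, hz⟩
    · rintro _ ⟨z, hz, rfl⟩
      refine ⟨_, ⟨z, hz, rfl⟩, ?_⟩
      rw [hdist]
      simp only [dist_self]
      rw [Real.dist_eq, abs_sub_comm]
      calc Real.sqrt (0 ^ 2 + |f z - g z| ^ 2) = |f z - g z| := by
            simp [Real.sqrt_sq_eq_abs, abs_abs]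
        _ ≤ ⨆ z : K, |f z - g z| := le_ciSup hbdd ⟨z, hz⟩
end
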